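/- arXiv:0801.0008 — 4 statements merged into one kernel-verified Lean document; each statement's English description precedes it below -/
import Mathlib

section
/- For all p, q ∈ {0,1,2,3} and all r, u ∈ {1,2}, r̄, ū ∈ {1,2}: 2 (σ_p)_{r,ū} (σ_q)_{u,r̄} = (σ_p)_{r,r̄} (σ_q)_{u,ū} + (σ_q)_{r,r̄} (σ_p)_{u,ū} − 2 e_{r,u} e_{r̄,ū} η_{pq} + i · Σ_{a=0}^{3} Σ_{b=0}^{3} Σ_{m=0}^{3} Σ_{n=0}^{3} η_{pa} η_{qb} ω^{ambn} (σ_m)_{u,ū} (σ_n)_{r,r̄}. -/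
open Finset

/-- The Infeld–van der Waerden (Pauli) matrices `σ_p` in a canonically
associated pair of frames. -/
noncomputable def sigma4 : Fin 4 → Matrix (Fin 2) (Fin 2) ℂ :=
  ![!![1, 0; 0, 1], !![0, 1; 1, 0], !![0, -Complex.I; Complex.I, 0], !![1, 0; 0, -1]]

/-- The inverse Infeld–van der Waerden matrices `τ_q`. -/
noncomputable def tau4 : Fin 4 → Matrix (Fin 2) (Fin 2) ℂ :=
  ![!![1, 0; 0, 1], !![0, 1; 1, 0], !![0, Complex.I; -Complex.I, 0], !![1, 0; 0, -1]]

/-- The Minkowski metric `η = diag (1, -1, -1, -1)`. -/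
noncomputable def eta : Fin 4 → Fin 4 → ℂ :=
  fun p q => if p = q then (if p = 0 then 1 else -1) else 0

/-- The spinor metric `d`. -/
noncomputable def dsp : Matrix (Fin 2) (Fin 2) ℂ := !![0, 1; -1, 0]

/-- The inverse spinor metric `e`. -/
noncomputable def esp : Matrix (Fin 2) (Fin 2) ℂ := !![0, -1; 1, 0]

/-- The totally antisymmetric Levi-Civita symbol in four indices with
`ε 0 1 2 3 = 1`, expressed through the Vandermonde product. -/
noncomputable def eps4 (a m b n : Fin 4) : ℂ :=
  ((((m.1 : ℤ) - a.1) * ((b.1 : ℤ) - a.1) * ((n.1 : ℤ) - a.1) *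
    ((b.1 : ℤ) - m.1) * ((n.1 : ℤ) - m.1) * ((n.1 : ℤ) - b.1) : ℤ) : ℂ) / 12

/-- The dual volume tensor `ω^{ambn} = -ε_{ambn}` in a right orthonormal frame. -/
noncomputable def omega4 (a m b n : Fin 4) : ℂ := -eps4 a m b n


lemma eta_sum (p : Fin 4) (f : Fin 4 → ℂ) :
    ∑ a : Fin 4, eta p a * f a = eta p p * f p := by
  rw [Finset.sum_eq_single p]
  · intro b _ hb; simp [eta, (Ne.symm hb)]
  · simp

lemma n0 : (0:Fin 4).val = 0 := rfl
lemma n1 : (1:Fin 4).val = 1 := rfl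
lemma n2 : (2:Fin 4).val = 2 := rfl
lemma n3 : (3:Fin 4).val = 3 := rfl
lemma v0 : ((0:Fin 4).val : ℤ) = 0 := rfl
lemma v1 : ((1:Fin 4).val : ℤ) = 1 := rfl
lemma v2 : ((2:Fin 4).val : ℤ) = 2 := rfl
lemma v3 : ((3:Fin 4).val : ℤ) = 3 := rfl

set_option maxHeartbeats 2000000 in

/-- The quadratic consequence of the cubic Infeld–van der Waerden identity
(obtained by contracting with `G^{u ū}_m`). -/
theorem contracted_cubic_IvdW_identity (p q : Fin 4) (r u rb ub : Fin 2) :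
    2 * sigma4 p r ub * sigma4 q u rb
      = sigma4 p r rb * sigma4 q u ub + sigma4 q r rb * sigma4 p u ub
        - 2 * esp r u * esp rb ub * eta p q
        + Complex.I * ∑ a : Fin 4, ∑ b : Fin 4, ∑ m : Fin 4, ∑ n : Fin 4,
            eta p a * eta q b * omega4 a m b n * sigma4 m u ub * sigma4 n r rb := by
  have h : ∑ a : Fin 4, ∑ b : Fin 4, ∑ m : Fin 4, ∑ n : Fin 4,
            eta p a * eta q b * omega4 a m b n * sigma4 m u ub * sigma4 n r rb
      = eta p p * (eta q q * ∑ m : Fin 4, ∑ n : Fin 4,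
            omega4 p m q n * sigma4 m u ub * sigma4 n r rb) := by
    trans ∑ a : Fin 4, eta p a * (∑ b : Fin 4, eta q b *
        (∑ m : Fin 4, ∑ n : Fin 4, omega4 a m b n * sigma4 m u ub * sigma4 n r rb))
    · congr 1; ext a
      rw [Finset.mul_sum]; congr 1; ext b
      rw [Finset.mul_sum, Finset.mul_sum]; congr 1; ext m
      rw [Finset.mul_sum, Finset.mul_sum]; congr 1; ext n
      ring
    · rw [eta_sum p, eta_sum q]
  rw [h]
  fin_cases p <;> fin_cases q <;>
    norm_num [Fin.sum_univ_four, omega4, eps4, eta, n0, n1, n2, n3, v0, v1, v2, v3] <;>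
    fin_cases r <;> fin_cases u <;> fin_cases rb <;> fin_cases ub <;>
    simp only [sigma4, esp, Matrix.cons_val] <;>
    norm_num [sigma4, esp, Complex.ext_iff, Fin.ext_iff]
end

section
/- For every t ∈ ℝ the trace-derivative identity holds: Σ_{k=1}^{2} Σ_{s̄=1}^{2} Σ_{m=0}^{3} (G_m)_{k,s̄} (S^m_{k,s̄})' = 2 Σ_{s=1}^{2} Σ_{u=1}^{2} (d_{s,u})' e^{u,s} + 2 Σ_{s̄=1}^{2} Σ_{ū=1}^{2} (d̄_{s̄,ū})' ē^{ū,s̄} − Σ_{n=0}^{3} Σ_{m=0}^{3} h^{nm} (g_{n,m})', where ′ denotes the derivative with respect to t. -/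
open Finset

open Matrix

lemma IvdW_det_diff {𝕜 : Type*} [NontriviallyNormedField 𝕜] [NormedAlgebra ℝ 𝕜]
    {n : Type*} [DecidableEq n] [Fintype n]
    {M : ℝ → Matrix n n 𝕜} (hM : ∀ i j, Differentiable ℝ fun t => M t i j) :
    Differentiable ℝ fun t => (M t).det := by
  simp only [Matrix.det_apply']
  exact Differentiable.fun_sum fun σ _ =>
    (Differentiable.fun_finset_prod (fun i _ => hM (σ i) i)).const_mul _

lemma IvdW_inv_entry_diff {𝕜 : Type*} [NontriviallyNormedField 𝕜] [NormedAlgebra ℝ 𝕜]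
    {n : Type*} [DecidableEq n] [Fintype n]
    {A B : ℝ → Matrix n n 𝕜} (hA : ∀ i j, Differentiable ℝ fun t => A t i j)
    (hAB : ∀ t, A t * B t = 1) :
    ∀ i j, Differentiable ℝ fun t => B t i j := by
  intro i j
  have hdet : ∀ t, (A t).det ≠ 0 := by
    intro t h0
    have := congrArg Matrix.det (hAB t)
    rw [Matrix.det_mul, h0, zero_mul, Matrix.det_one] at this
    exact zero_ne_one this
  have hB : ∀ t, B t i j = ((A t).det)⁻¹ * ((A t).updateRow j (Pi.single i 1)).det := by
    intro t
    have : B t = (A t)⁻¹ := (Matrix.inv_eq_right_inv (hAB t)).symm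
    rw [this, Matrix.inv_def, Matrix.smul_apply, Matrix.adjugate_apply,
      Ring.inverse_eq_inv, smul_eq_mul]
  have : (fun t => B t i j)
      = fun t => ((A t).det)⁻¹ * ((A t).updateRow j (Pi.single i 1)).det := funext hB
  rw [this]
  refine Differentiable.mul (Differentiable.inv (IvdW_det_diff hA) hdet) (IvdW_det_diff ?_)
  intro a b
  by_cases hab : a = j
  · subst hab; simp only [Matrix.updateRow_self]; exact differentiable_const _
  · simp only [Matrix.updateRow_ne hab]; exact hA a b

lemma IvdW_entry_mul_comm {𝕜 : Type*} [Field 𝕜] {n : Type*} [DecidableEq n] [Fintype n]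
    {A B : n → n → 𝕜} (hAB : ∀ p q, (∑ r : n, A p r * B r q) = if p = q then 1 else 0) :
    ∀ p q, (∑ r : n, B p r * A r q) = if p = q then 1 else 0 := by
  have h1 : Matrix.of A * Matrix.of B = 1 := by
    ext p q
    simpa [Matrix.mul_apply, Matrix.one_apply] using hAB p q
  have h2 := mul_eq_one_comm.mp h1
  intro p q
  have := congrFun (congrFun h2 p) q
  simpa [Matrix.mul_apply, Matrix.one_apply] using this

lemma IvdW_inv_symm {𝕜 : Type*} [Field 𝕜] {n : Type*} [DecidableEq n] [Fintype n]
    {A B : Matrix n n 𝕜} (hA : Aᵀ = A) (hAB : A * B = 1) : Bᵀ = B := by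
  have h1 : Bᵀ * A = 1 := by
    have h := congrArg Matrix.transpose hAB
    rwa [Matrix.transpose_mul, hA, Matrix.transpose_one] at h
  calc Bᵀ = Bᵀ * (A * B) := by rw [hAB, mul_one]
    _ = (Bᵀ * A) * B := (mul_assoc _ _ _).symm
    _ = B := by rw [h1, one_mul]

set_option maxHeartbeats 2000000 in
/-- The trace-derivative identity
`Σ_{k,s̄,m} (G_m)_{k,s̄} (S^m_{k,s̄})' = 2 Σ_{s,u} (d_{s,u})' e^{u,s}
  + 2 Σ_{s̄,ū} (d̄_{s̄,ū})' ē^{ū,s̄} - Σ_{n,m} h^{nm} (g_{n,m})'`. -/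
theorem IvdW_trace_derivative
    (g h : ℝ → Fin 4 → Fin 4 → ℝ)
    (hg_symm : ∀ t i j, g t i j = g t j i)
    (hg_diff : ∀ i j, Differentiable ℝ (fun t => g t i j))
    (hgh : ∀ t p q, ∑ r : Fin 4, g t p r * h t r q = if p = q then (1 : ℝ) else 0)
    (d e : ℝ → Fin 2 → Fin 2 → ℂ)
    (hd_diff : ∀ i j, Differentiable ℝ (fun t => d t i j))
    (hde : ∀ t j i, ∑ r : Fin 2, d t j r * e t r i = if j = i then (1 : ℂ) else 0)
    (G : ℝ → Fin 4 → Fin 2 → Fin 2 → ℂ)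
    (hG_diff : ∀ p i j, Differentiable ℝ (fun t => G t p i j))
    (S : ℝ → Fin 4 → Fin 2 → Fin 2 → ℂ)
    (hS : ∀ t q s sb, S t q s sb
      = ∑ r : Fin 2, ∑ rb : Fin 2, ∑ p : Fin 4,
          G t p r rb * (h t p q : ℂ) * d t r s * star (d t rb sb))
    (hquad1 : ∀ t p q, ∑ r : Fin 2, ∑ rb : Fin 2, G t p r rb * S t q r rb
      = 2 * (if p = q then (1 : ℂ) else 0))
    (hquad2 : ∀ t (r rb s sb : Fin 2), ∑ q : Fin 4, G t q r rb * S t q s sb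
      = 2 * (if r = s then (1 : ℂ) else 0) * (if rb = sb then (1 : ℂ) else 0))
    : ∀ t : ℝ,
      ∑ k : Fin 2, ∑ sb : Fin 2, ∑ m : Fin 4,
          G t m k sb * deriv (fun x => S x m k sb) t
        = 2 * (∑ s : Fin 2, ∑ u : Fin 2, deriv (fun x => d x s u) t * e t u s)
          + 2 * (∑ sb : Fin 2, ∑ ub : Fin 2,
              deriv (fun x => star (d x sb ub)) t * star (e t ub sb))
          - ∑ n : Fin 4, ∑ m : Fin 4, (h t n m : ℂ) * (deriv (fun x => g x n m) t : ℂ) := by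
  -- basic matrix facts
  have hgh' : ∀ t, Matrix.of (g t) * Matrix.of (h t) = 1 := by
    intro t; ext p q
    simpa [Matrix.mul_apply, Matrix.one_apply] using hgh t p q
  have hhg : ∀ t p q, (∑ r : Fin 4, h t p r * g t r q) = if p = q then (1:ℝ) else 0 :=
    fun t => IvdW_entry_mul_comm (hgh t)
  have hed : ∀ t j i, (∑ r : Fin 2, e t j r * d t r i) = if j = i then (1:ℂ) else 0 :=
    fun t => IvdW_entry_mul_comm (hde t)
  have hsymm : ∀ t p q, h t p q = h t q p := by
    intro t p q
    have hA : (Matrix.of (g t))ᵀ = Matrix.of (g t) := by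
      ext i j; exact hg_symm t j i
    have hB := IvdW_inv_symm hA (hgh' t)
    exact congrFun (congrFun hB q) p
  have hh_diff : ∀ p q, Differentiable ℝ fun x => h x p q :=
    IvdW_inv_entry_diff (fun i j => hg_diff i j) hgh'
  intro t
  -- HasDerivAt instances
  have HG : ∀ (p : Fin 4) (r rb : Fin 2), HasDerivAt (fun x => G x p r rb)
      (deriv (fun x => G x p r rb) t) t := fun p r rb => (hG_diff p r rb t).hasDerivAt
  have Hh : ∀ p q : Fin 4, HasDerivAt (fun x => ((h x p q : ℝ) : ℂ))
      (((deriv (fun x => h x p q) t : ℝ)) : ℂ) t :=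
    fun p q => ((hh_diff p q t).hasDerivAt).ofReal_comp
  have Hd : ∀ r s : Fin 2, HasDerivAt (fun x => d x r s) (deriv (fun x => d x r s) t) t :=
    fun r s => (hd_diff r s t).hasDerivAt
  have Hdb : ∀ r s : Fin 2, HasDerivAt (fun x => star (d x r s))
      (deriv (fun x => star (d x r s)) t) t :=
    fun r s => ((hd_diff r s t).hasDerivAt.star).differentiableAt.hasDerivAt
  have Hgr : ∀ p q : Fin 4, HasDerivAt (fun x => g x p q) (deriv (fun x => g x p q) t) t :=
    fun p q => (hg_diff p q t).hasDerivAt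
  have Hhr : ∀ p q : Fin 4, HasDerivAt (fun x => h x p q) (deriv (fun x => h x p q) t) t :=
    fun p q => (hh_diff p q t).hasDerivAt
  have HS : ∀ (m : Fin 4) (k sb : Fin 2), HasDerivAt (fun x => S x m k sb)
      (∑ r : Fin 2, ∑ rb : Fin 2, ∑ p : Fin 4,
        (deriv (fun x => G x p r rb) t * (h t p m : ℂ) * d t r k * star (d t rb sb)
        + G t p r rb * ((deriv (fun x => h x p m) t : ℝ) : ℂ) * d t r k * star (d t rb sb)
        + G t p r rb * (h t p m : ℂ) * deriv (fun x => d x r k) t * star (d t rb sb)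
        + G t p r rb * (h t p m : ℂ) * d t r k * deriv (fun x => star (d x rb sb)) t)) t := by
    intro m k sb
    have hfun : (fun x => S x m k sb) = fun x => ∑ r : Fin 2, ∑ rb : Fin 2, ∑ p : Fin 4,
        G x p r rb * (h x p m : ℂ) * d x r k * star (d x rb sb) := funext fun x => hS x m k sb
    rw [hfun]
    refine HasDerivAt.fun_sum fun r _ => ?_
    refine HasDerivAt.fun_sum fun rb _ => ?_
    refine HasDerivAt.fun_sum fun p _ => ?_
    have h4 := (((HG p r rb).fun_mul (Hh p m)).fun_mul (Hd r k)).fun_mul (Hdb rb sb)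
    exact h4.congr_deriv (by ring)
  have hderivS : ∀ (m : Fin 4) (k sb : Fin 2), deriv (fun x => S x m k sb) t
      = ∑ r : Fin 2, ∑ rb : Fin 2, ∑ p : Fin 4,
        (deriv (fun x => G x p r rb) t * (h t p m : ℂ) * d t r k * star (d t rb sb)
        + G t p r rb * ((deriv (fun x => h x p m) t : ℝ) : ℂ) * d t r k * star (d t rb sb)
        + G t p r rb * (h t p m : ℂ) * deriv (fun x => d x r k) t * star (d t rb sb)
        + G t p r rb * (h t p m : ℂ) * d t r k * deriv (fun x => star (d x rb sb)) t) :=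
    fun m k sb => (HS m k sb).deriv
  have hconst : ∀ x : ℝ, (∑ k : Fin 2, ∑ sb : Fin 2, ∑ m : Fin 4, G x m k sb * S x m k sb)
      = (8 : ℂ) := by
    intro x
    have h2 : ∀ m : Fin 4, (∑ k : Fin 2, ∑ sb : Fin 2, G x m k sb * S x m k sb) = 2 := by
      intro m; simpa using hquad1 x m m
    calc (∑ k : Fin 2, ∑ sb : Fin 2, ∑ m : Fin 4, G x m k sb * S x m k sb)
        = ∑ m : Fin 4, ∑ k : Fin 2, ∑ sb : Fin 2, G x m k sb * S x m k sb := by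
          simp only [Fin.sum_univ_two, Fin.sum_univ_four]; ring
      _ = ∑ m : Fin 4, (2:ℂ) := Finset.sum_congr rfl fun m _ => h2 m
      _ = 8 := by norm_num
  have hAB : (∑ k : Fin 2, ∑ sb : Fin 2, ∑ m : Fin 4,
        deriv (fun x => G x m k sb) t * S t m k sb)
      + (∑ k : Fin 2, ∑ sb : Fin 2, ∑ m : Fin 4,
        G t m k sb * deriv (fun x => S x m k sb) t) = 0 := by
    have h1 : HasDerivAt (fun x => ∑ k : Fin 2, ∑ sb : Fin 2, ∑ m : Fin 4,
        G x m k sb * S x m k sb)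
        (∑ k : Fin 2, ∑ sb : Fin 2, ∑ m : Fin 4,
          (deriv (fun x => G x m k sb) t * S t m k sb
           + G t m k sb * deriv (fun x => S x m k sb) t)) t := by
      refine HasDerivAt.fun_sum fun k _ => ?_
      refine HasDerivAt.fun_sum fun sb _ => ?_
      refine HasDerivAt.fun_sum fun m _ => ?_
      exact (HG m k sb).mul ((HS m k sb).differentiableAt.hasDerivAt)
    have h2 : HasDerivAt (fun x => ∑ k : Fin 2, ∑ sb : Fin 2, ∑ m : Fin 4,
        G x m k sb * S x m k sb) 0 t := by
      have hfun : (fun x => ∑ k : Fin 2, ∑ sb : Fin 2, ∑ m : Fin 4, G x m k sb * S x m k sb)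
          = fun _ => (8:ℂ) := funext hconst
      rw [hfun]; exact hasDerivAt_const t 8
    have h3 := h1.unique h2
    rw [← h3]
    simp only [Finset.sum_add_distrib]
  have hhgC : ∀ m n : Fin 4, (∑ q : Fin 4, (h t m q : ℂ) * (g t q n : ℂ))
      = if m = n then (1:ℂ) else 0 := by
    intro m n
    have h0 := hhg t m n
    split_ifs with hmn
    · rw [if_pos hmn] at h0; exact_mod_cast h0
    · rw [if_neg hmn] at h0; exact_mod_cast h0
  have hdeStar : ∀ j i : Fin 2, (∑ r : Fin 2, star (d t j r) * star (e t r i))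
      = if j = i then (1:ℂ) else 0 := by
    intro j i
    have h0 := congrArg star (hde t j i)
    rw [star_sum] at h0
    simp only [star_mul'] at h0
    rw [h0]
    split_ifs <;> simp
  have hedStar : ∀ j i : Fin 2, (∑ r : Fin 2, star (e t j r) * star (d t r i))
      = if j = i then (1:ℂ) else 0 := by
    intro j i
    have h0 := congrArg star (hed t j i)
    rw [star_sum] at h0
    simp only [star_mul'] at h0
    rw [h0]
    split_ifs <;> simp
  have hSsub : ∀ (p q : Fin 4), (∑ r : Fin 2, ∑ rb : Fin 2, G t p r rb *
      (∑ a : Fin 2, ∑ b : Fin 2, ∑ m : Fin 4,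
        G t m a b * (h t m q : ℂ) * d t a r * star (d t b rb)))
      = 2 * if p = q then (1:ℂ) else 0 := by
    intro p q
    have h0 := hquad1 t p q
    simp only [hS] at h0
    exact h0
  have hW : ∀ p n : Fin 4, (∑ r : Fin 2, ∑ rb : Fin 2, ∑ a : Fin 2, ∑ b : Fin 2,
      G t p r rb * G t n a b * d t a r * star (d t b rb)) = 2 * (g t p n : ℂ) := by
    intro p n
    have step1 : (∑ q : Fin 4, (2 * if p = q then (1:ℂ) else 0) * (g t q n : ℂ))
        = 2 * (g t p n : ℂ) := by
      simp [mul_ite, ite_mul]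
    have main : (∑ q : Fin 4, (2 * if p = q then (1:ℂ) else 0) * (g t q n : ℂ))
        = ∑ r : Fin 2, ∑ rb : Fin 2, ∑ a : Fin 2, ∑ b : Fin 2,
          G t p r rb * G t n a b * d t a r * star (d t b rb) := by
      calc (∑ q : Fin 4, (2 * if p = q then (1:ℂ) else 0) * (g t q n : ℂ))
          = ∑ q : Fin 4, (∑ r : Fin 2, ∑ rb : Fin 2, G t p r rb *
            (∑ a : Fin 2, ∑ b : Fin 2, ∑ m : Fin 4,
              G t m a b * (h t m q : ℂ) * d t a r * star (d t b rb))) * (g t q n : ℂ) := by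
            refine Finset.sum_congr rfl fun q _ => ?_
            rw [hSsub p q]
        _ = ∑ r : Fin 2, ∑ rb : Fin 2, ∑ a : Fin 2, ∑ b : Fin 2, ∑ m : Fin 4,
            (G t p r rb * G t m a b * d t a r * star (d t b rb))
              * (∑ q : Fin 4, (h t m q : ℂ) * (g t q n : ℂ)) := by
            simp only [Fin.sum_univ_two, Fin.sum_univ_four]; ring
        _ = ∑ r : Fin 2, ∑ rb : Fin 2, ∑ a : Fin 2, ∑ b : Fin 2, ∑ m : Fin 4,
            (G t p r rb * G t m a b * d t a r * star (d t b rb))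
              * (if m = n then (1:ℂ) else 0) := by
            refine Finset.sum_congr rfl fun r _ => Finset.sum_congr rfl fun rb _ =>
              Finset.sum_congr rfl fun a _ => Finset.sum_congr rfl fun b _ =>
              Finset.sum_congr rfl fun m _ => ?_
            rw [hhgC m n]
        _ = ∑ r : Fin 2, ∑ rb : Fin 2, ∑ a : Fin 2, ∑ b : Fin 2,
            G t p r rb * G t n a b * d t a r * star (d t b rb) := by
            refine Finset.sum_congr rfl fun r _ => Finset.sum_congr rfl fun rb _ =>
              Finset.sum_congr rfl fun a _ => Finset.sum_congr rfl fun b _ => ?_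
            simp [mul_ite]
    exact main.symm.trans step1
  have hEE : ∀ r rb c cb : Fin 2, (∑ q : Fin 4, ∑ p : Fin 4,
      G t q r rb * G t p c cb * (h t p q : ℂ)) = 2 * (e t r c * star (e t rb cb)) := by
    intro r rb c cb
    have step1 : (∑ s : Fin 2, ∑ sbb : Fin 2,
        (2 * (if r = s then (1:ℂ) else 0) * (if rb = sbb then (1:ℂ) else 0))
          * (e t s c * star (e t sbb cb))) = 2 * (e t r c * star (e t rb cb)) := by
      simp [mul_ite, ite_mul]
    have main : (∑ s : Fin 2, ∑ sbb : Fin 2,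
        (2 * (if r = s then (1:ℂ) else 0) * (if rb = sbb then (1:ℂ) else 0))
          * (e t s c * star (e t sbb cb)))
        = ∑ q : Fin 4, ∑ p : Fin 4, G t q r rb * G t p c cb * (h t p q : ℂ) := by
      calc (∑ s : Fin 2, ∑ sbb : Fin 2,
          (2 * (if r = s then (1:ℂ) else 0) * (if rb = sbb then (1:ℂ) else 0))
            * (e t s c * star (e t sbb cb)))
          = ∑ s : Fin 2, ∑ sbb : Fin 2, (∑ q : Fin 4, G t q r rb *
              (∑ a : Fin 2, ∑ b : Fin 2, ∑ p : Fin 4,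
                G t p a b * (h t p q : ℂ) * d t a s * star (d t b sbb)))
              * (e t s c * star (e t sbb cb)) := by
            refine Finset.sum_congr rfl fun s _ => Finset.sum_congr rfl fun sbb _ => ?_
            have h0 := hquad2 t r rb s sbb
            simp only [hS] at h0
            rw [h0]
        _ = ∑ q : Fin 4, ∑ p : Fin 4, ∑ a : Fin 2, ∑ b : Fin 2,
            (G t q r rb * G t p a b * (h t p q : ℂ)) *
              ((∑ s : Fin 2, d t a s * e t s c)
                * (∑ sbb : Fin 2, star (d t b sbb) * star (e t sbb cb))) := by
            simp only [Fin.sum_univ_two, Fin.sum_univ_four]; ring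
        _ = ∑ q : Fin 4, ∑ p : Fin 4, ∑ a : Fin 2, ∑ b : Fin 2,
            (G t q r rb * G t p a b * (h t p q : ℂ)) *
              ((if a = c then (1:ℂ) else 0) * (if b = cb then (1:ℂ) else 0)) := by
            refine Finset.sum_congr rfl fun q _ => Finset.sum_congr rfl fun p _ =>
              Finset.sum_congr rfl fun a _ => Finset.sum_congr rfl fun b _ => ?_
            rw [hde t a c, hdeStar b cb]
        _ = ∑ q : Fin 4, ∑ p : Fin 4, G t q r rb * G t p c cb * (h t p q : ℂ) := by
            refine Finset.sum_congr rfl fun q _ => Finset.sum_congr rfl fun p _ => ?_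
            simp [mul_ite, ite_mul]
    exact main.symm.trans step1
  have symmEE : ∀ r rb c cb : Fin 2,
      e t r c * star (e t rb cb) = e t c r * star (e t cb rb) := by
    intro r rb c cb
    have h1 := hEE r rb c cb
    have h2 := hEE c cb r rb
    have h3 : (∑ q : Fin 4, ∑ p : Fin 4, G t q c cb * G t p r rb * (h t p q : ℂ))
        = ∑ q : Fin 4, ∑ p : Fin 4, G t q r rb * G t p c cb * (h t p q : ℂ) := by
      rw [Finset.sum_comm]
      refine Finset.sum_congr rfl fun p _ => Finset.sum_congr rfl fun q _ => ?_
      rw [hsymm t q p]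
      ring
    have h4 : 2 * (e t c r * star (e t cb rb)) = 2 * (e t r c * star (e t rb cb)) := by
      rw [← h1, ← h2, h3]
    exact (mul_left_cancel₀ two_ne_zero h4).symm
  have symmDD : ∀ a b x y : Fin 2, d t a x * star (d t b y) = d t x a * star (d t y b) := by
    have hM : ∀ (M N : Matrix (Fin 2 × Fin 2) (Fin 2 × Fin 2) ℂ),
        (M = Matrix.of fun rp cp => e t rp.1 cp.1 * star (e t rp.2 cp.2)) →
        (N = Matrix.of fun rp cp => d t rp.1 cp.1 * star (d t rp.2 cp.2)) →
        Nᵀ = N := by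
      intro M N hMdef hNdef
      have hMN : M * N = 1 := by
        ext ⟨r, rb⟩ ⟨x, y⟩
        rw [Matrix.mul_apply]
        rw [hMdef, hNdef]
        calc (∑ cp : Fin 2 × Fin 2,
              (e t r cp.1 * star (e t rb cp.2)) * (d t cp.1 x * star (d t cp.2 y)))
            = (∑ c : Fin 2, e t r c * d t c x)
              * (∑ cb : Fin 2, star (e t rb cb) * star (d t cb y)) := by
              rw [Fintype.sum_prod_type]
              simp only [Fin.sum_univ_two]
              ring
          _ = (if r = x then (1:ℂ) else 0) * (if rb = y then (1:ℂ) else 0) := by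
              rw [hed t r x, hedStar rb y]
          _ = (1 : Matrix (Fin 2 × Fin 2) (Fin 2 × Fin 2) ℂ) (r, rb) (x, y) := by
              rw [Matrix.one_apply]
              by_cases h1 : r = x <;> by_cases h2 : rb = y <;>
                simp [h1, h2, Prod.ext_iff]
      have hMs : Mᵀ = M := by
        ext ⟨r, rb⟩ ⟨c, cb⟩
        rw [Matrix.transpose_apply, hMdef]
        exact (symmEE r rb c cb).symm
      exact IvdW_inv_symm hMs hMN
    intro a b x y
    have hNs := hM _ _ rfl rfl
    have := congrFun (congrFun hNs (a, b)) (x, y)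
    simpa [Matrix.transpose_apply] using this.symm
  -- real derivative identity for h and g
  have hderiv_hg : ∀ p q : Fin 4, (∑ r : Fin 4,
      (deriv (fun x => h x p r) t * g t r q + h t p r * deriv (fun x => g x r q) t)) = 0 := by
    intro p q
    have h1 : HasDerivAt (fun x => ∑ r : Fin 4, h x p r * g x r q)
        (∑ r : Fin 4, (deriv (fun x => h x p r) t * g t r q
          + h t p r * deriv (fun x => g x r q) t)) t :=
      HasDerivAt.fun_sum fun r _ => (Hhr p r).mul (Hgr r q)
    have hfun : (fun x => ∑ r : Fin 4, h x p r * g x r q)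
        = fun _ => if p = q then (1:ℝ) else 0 := funext fun x => hhg x p q
    rw [hfun] at h1
    exact h1.unique (hasDerivAt_const t _)
  have hgd_symm : ∀ p r : Fin 4, deriv (fun x => g x r p) t = deriv (fun x => g x p r) t := by
    intro p r
    have : (fun x => g x r p) = fun x => g x p r := funext fun x => hg_symm x r p
    rw [this]
  have hsum1 : (∑ p : Fin 4, ∑ r : Fin 4, deriv (fun x => h x p r) t * g t p r)
      + (∑ p : Fin 4, ∑ r : Fin 4, h t p r * deriv (fun x => g x p r) t) = 0 := by
    have hsum0 : (∑ p : Fin 4, ∑ r : Fin 4,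
        (deriv (fun x => h x p r) t * g t r p + h t p r * deriv (fun x => g x r p) t)) = 0 := by
      calc (∑ p : Fin 4, ∑ r : Fin 4,
          (deriv (fun x => h x p r) t * g t r p + h t p r * deriv (fun x => g x r p) t))
          = ∑ p : Fin 4, (0:ℝ) := Finset.sum_congr rfl fun p _ => hderiv_hg p p
        _ = 0 := by simp
    have hsum0' : (∑ p : Fin 4, ∑ r : Fin 4,
        (deriv (fun x => h x p r) t * g t p r + h t p r * deriv (fun x => g x p r) t)) = 0 := by
      rw [← hsum0]
      refine Finset.sum_congr rfl fun p _ => Finset.sum_congr rfl fun r _ => ?_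
      rw [hg_symm t p r, hgd_symm p r]
    rw [← hsum0']
    simp only [Finset.sum_add_distrib]
  have hgderivC : ∀ n m : Fin 4, deriv (fun x => ((g x n m : ℝ) : ℂ)) t
      = ((deriv (fun x => g x n m) t : ℝ) : ℂ) :=
    fun n m => ((Hgr n m).ofReal_comp).deriv
  have hcast : (∑ p : Fin 4, ∑ m : Fin 4,
        ((deriv (fun x => h x p m) t : ℝ) : ℂ) * ((g t p m : ℝ) : ℂ))
      = -(∑ n : Fin 4, ∑ m : Fin 4, (h t n m : ℂ) * ((deriv (fun x => g x n m) t : ℝ) : ℂ)) := by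
    have hrealR : (∑ p : Fin 4, ∑ m : Fin 4, deriv (fun x => h x p m) t * g t p m)
        = -(∑ n : Fin 4, ∑ m : Fin 4, h t n m * deriv (fun x => g x n m) t) := by
      linarith [hsum1]
    have hcc := congrArg (fun r : ℝ => (r : ℂ)) hrealR
    push_cast at hcc
    exact hcc
  -- trace facts
  have htr1 : (∑ sb : Fin 2, ∑ rb : Fin 2, star (d t rb sb) * star (e t sb rb)) = 2 := by
    rw [Finset.sum_comm]
    calc (∑ rb : Fin 2, ∑ sb : Fin 2, star (d t rb sb) * star (e t sb rb))
        = ∑ _rb : Fin 2, (1:ℂ) :=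
          Finset.sum_congr rfl fun rb _ => by simpa using hdeStar rb rb
      _ = 2 := by norm_num
  have htr2 : (∑ k : Fin 2, ∑ r : Fin 2, d t r k * e t k r) = 2 := by
    rw [Finset.sum_comm]
    calc (∑ r : Fin 2, ∑ k : Fin 2, d t r k * e t k r)
        = ∑ _r : Fin 2, (1:ℂ) :=
          Finset.sum_congr rfl fun r _ => by simpa using hde t r r
      _ = 2 := by norm_num
  -- T1
  have hT1 : (∑ k : Fin 2, ∑ sb : Fin 2, ∑ m : Fin 4, ∑ r : Fin 2, ∑ rb : Fin 2, ∑ p : Fin 4,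
        G t m k sb * (deriv (fun x => G x p r rb) t * (h t p m : ℂ) * d t r k * star (d t rb sb)))
      = ∑ k : Fin 2, ∑ sb : Fin 2, ∑ m : Fin 4,
          deriv (fun x => G x m k sb) t * S t m k sb := by
    calc (∑ k : Fin 2, ∑ sb : Fin 2, ∑ m : Fin 4, ∑ r : Fin 2, ∑ rb : Fin 2, ∑ p : Fin 4,
        G t m k sb * (deriv (fun x => G x p r rb) t * (h t p m : ℂ) * d t r k * star (d t rb sb)))
        = ∑ k : Fin 2, ∑ sb : Fin 2, ∑ m : Fin 4, ∑ r : Fin 2, ∑ rb : Fin 2, ∑ p : Fin 4,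
          G t m k sb * (deriv (fun x => G x p r rb) t * (h t m p : ℂ) * d t k r * star (d t sb rb)) := by
          refine Finset.sum_congr rfl fun k _ => Finset.sum_congr rfl fun sb _ =>
            Finset.sum_congr rfl fun m _ => Finset.sum_congr rfl fun r _ =>
            Finset.sum_congr rfl fun rb _ => Finset.sum_congr rfl fun p _ => ?_
          rw [hsymm t p m]
          linear_combination (G t m k sb * deriv (fun x => G x p r rb) t * ((h t m p : ℝ) : ℂ))
            * symmDD r rb k sb
      _ = ∑ k : Fin 2, ∑ sb : Fin 2, ∑ m : Fin 4,
          deriv (fun x => G x m k sb) t * (∑ r : Fin 2, ∑ rb : Fin 2, ∑ p : Fin 4,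
            G t p r rb * (h t p m : ℂ) * d t r k * star (d t rb sb)) := by
          simp only [Fin.sum_univ_two, Fin.sum_univ_four]; ring
      _ = ∑ k : Fin 2, ∑ sb : Fin 2, ∑ m : Fin 4,
          deriv (fun x => G x m k sb) t * S t m k sb := by
          refine Finset.sum_congr rfl fun k _ => Finset.sum_congr rfl fun sb _ =>
            Finset.sum_congr rfl fun m _ => ?_
          rw [hS t m k sb]
  -- T2
  have hT2 : (∑ k : Fin 2, ∑ sb : Fin 2, ∑ m : Fin 4, ∑ r : Fin 2, ∑ rb : Fin 2, ∑ p : Fin 4,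
        G t m k sb * (G t p r rb * ((deriv (fun x => h x p m) t : ℝ) : ℂ)
          * d t r k * star (d t rb sb)))
      = -(2 * ∑ n : Fin 4, ∑ m : Fin 4,
          (h t n m : ℂ) * ((deriv (fun x => g x n m) t : ℝ) : ℂ)) := by
    calc (∑ k : Fin 2, ∑ sb : Fin 2, ∑ m : Fin 4, ∑ r : Fin 2, ∑ rb : Fin 2, ∑ p : Fin 4,
        G t m k sb * (G t p r rb * ((deriv (fun x => h x p m) t : ℝ) : ℂ)
          * d t r k * star (d t rb sb)))
        = ∑ k : Fin 2, ∑ sb : Fin 2, ∑ m : Fin 4, ∑ r : Fin 2, ∑ rb : Fin 2, ∑ p : Fin 4,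
          G t m k sb * (G t p r rb * ((deriv (fun x => h x p m) t : ℝ) : ℂ)
            * d t k r * star (d t sb rb)) := by
          refine Finset.sum_congr rfl fun k _ => Finset.sum_congr rfl fun sb _ =>
            Finset.sum_congr rfl fun m _ => Finset.sum_congr rfl fun r _ =>
            Finset.sum_congr rfl fun rb _ => Finset.sum_congr rfl fun p _ => ?_
          linear_combination (G t m k sb * G t p r rb * ((deriv (fun x => h x p m) t : ℝ) : ℂ))
            * symmDD r rb k sb
      _ = ∑ p : Fin 4, ∑ m : Fin 4, ((deriv (fun x => h x p m) t : ℝ) : ℂ) *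
            (∑ r : Fin 2, ∑ rb : Fin 2, ∑ a : Fin 2, ∑ b : Fin 2,
              G t p r rb * G t m a b * d t a r * star (d t b rb)) := by
          simp only [Fin.sum_univ_two, Fin.sum_univ_four]; ring
      _ = ∑ p : Fin 4, ∑ m : Fin 4, ((deriv (fun x => h x p m) t : ℝ) : ℂ)
            * (2 * ((g t p m : ℝ) : ℂ)) := by
          refine Finset.sum_congr rfl fun p _ => Finset.sum_congr rfl fun m _ => ?_
          rw [hW p m]
      _ = 2 * (∑ p : Fin 4, ∑ m : Fin 4,
            ((deriv (fun x => h x p m) t : ℝ) : ℂ) * ((g t p m : ℝ) : ℂ)) := by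
          simp only [Fin.sum_univ_four]; ring
      _ = -(2 * ∑ n : Fin 4, ∑ m : Fin 4,
            (h t n m : ℂ) * ((deriv (fun x => g x n m) t : ℝ) : ℂ)) := by
          rw [hcast]; ring
  -- T3
  have hT3 : (∑ k : Fin 2, ∑ sb : Fin 2, ∑ m : Fin 4, ∑ r : Fin 2, ∑ rb : Fin 2, ∑ p : Fin 4,
        G t m k sb * (G t p r rb * (h t p m : ℂ) * deriv (fun x => d x r k) t * star (d t rb sb)))
      = 4 * (∑ s : Fin 2, ∑ u : Fin 2, deriv (fun x => d x s u) t * e t u s) := by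
    calc (∑ k : Fin 2, ∑ sb : Fin 2, ∑ m : Fin 4, ∑ r : Fin 2, ∑ rb : Fin 2, ∑ p : Fin 4,
        G t m k sb * (G t p r rb * (h t p m : ℂ) * deriv (fun x => d x r k) t * star (d t rb sb)))
        = ∑ k : Fin 2, ∑ sb : Fin 2, ∑ r : Fin 2, ∑ rb : Fin 2,
            (∑ q : Fin 4, ∑ p : Fin 4, G t q k sb * G t p r rb * (h t p q : ℂ))
              * (deriv (fun x => d x r k) t * star (d t rb sb)) := by
          simp only [Fin.sum_univ_two, Fin.sum_univ_four]; ring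
      _ = ∑ k : Fin 2, ∑ sb : Fin 2, ∑ r : Fin 2, ∑ rb : Fin 2,
            (2 * (e t k r * star (e t sb rb)))
              * (deriv (fun x => d x r k) t * star (d t rb sb)) := by
          refine Finset.sum_congr rfl fun k _ => Finset.sum_congr rfl fun sb _ =>
            Finset.sum_congr rfl fun r _ => Finset.sum_congr rfl fun rb _ => ?_
          rw [hEE k sb r rb]
      _ = 2 * (∑ s : Fin 2, ∑ u : Fin 2, deriv (fun x => d x s u) t * e t u s)
            * (∑ sb : Fin 2, ∑ rb : Fin 2, star (d t rb sb) * star (e t sb rb)) := by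
          simp only [Fin.sum_univ_two]; ring
      _ = 4 * (∑ s : Fin 2, ∑ u : Fin 2, deriv (fun x => d x s u) t * e t u s) := by
          rw [htr1]; ring
  -- T4
  have hT4 : (∑ k : Fin 2, ∑ sb : Fin 2, ∑ m : Fin 4, ∑ r : Fin 2, ∑ rb : Fin 2, ∑ p : Fin 4,
        G t m k sb * (G t p r rb * (h t p m : ℂ) * d t r k * deriv (fun x => star (d x rb sb)) t))
      = 4 * (∑ sb : Fin 2, ∑ ub : Fin 2,
          deriv (fun x => star (d x sb ub)) t * star (e t ub sb)) := by
    calc (∑ k : Fin 2, ∑ sb : Fin 2, ∑ m : Fin 4, ∑ r : Fin 2, ∑ rb : Fin 2, ∑ p : Fin 4,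
        G t m k sb * (G t p r rb * (h t p m : ℂ) * d t r k * deriv (fun x => star (d x rb sb)) t))
        = ∑ k : Fin 2, ∑ sb : Fin 2, ∑ r : Fin 2, ∑ rb : Fin 2,
            (∑ q : Fin 4, ∑ p : Fin 4, G t q k sb * G t p r rb * (h t p q : ℂ))
              * (d t r k * deriv (fun x => star (d x rb sb)) t) := by
          simp only [Fin.sum_univ_two, Fin.sum_univ_four]; ring
      _ = ∑ k : Fin 2, ∑ sb : Fin 2, ∑ r : Fin 2, ∑ rb : Fin 2,
            (2 * (e t k r * star (e t sb rb)))
              * (d t r k * deriv (fun x => star (d x rb sb)) t) := by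
          refine Finset.sum_congr rfl fun k _ => Finset.sum_congr rfl fun sb _ =>
            Finset.sum_congr rfl fun r _ => Finset.sum_congr rfl fun rb _ => ?_
          rw [hEE k sb r rb]
      _ = 2 * (∑ k : Fin 2, ∑ r : Fin 2, d t r k * e t k r)
            * (∑ sb : Fin 2, ∑ ub : Fin 2,
              deriv (fun x => star (d x sb ub)) t * star (e t ub sb)) := by
          simp only [Fin.sum_univ_two]; ring
      _ = 4 * (∑ sb : Fin 2, ∑ ub : Fin 2,
            deriv (fun x => star (d x sb ub)) t * star (e t ub sb)) := by
          rw [htr2]; ring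
  -- split B
  have hsplit : (∑ k : Fin 2, ∑ sb : Fin 2, ∑ m : Fin 4,
        G t m k sb * deriv (fun x => S x m k sb) t)
      = (∑ k : Fin 2, ∑ sb : Fin 2, ∑ m : Fin 4, ∑ r : Fin 2, ∑ rb : Fin 2, ∑ p : Fin 4,
          G t m k sb * (deriv (fun x => G x p r rb) t * (h t p m : ℂ)
            * d t r k * star (d t rb sb)))
        + (∑ k : Fin 2, ∑ sb : Fin 2, ∑ m : Fin 4, ∑ r : Fin 2, ∑ rb : Fin 2, ∑ p : Fin 4,
          G t m k sb * (G t p r rb * ((deriv (fun x => h x p m) t : ℝ) : ℂ)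
            * d t r k * star (d t rb sb)))
        + (∑ k : Fin 2, ∑ sb : Fin 2, ∑ m : Fin 4, ∑ r : Fin 2, ∑ rb : Fin 2, ∑ p : Fin 4,
          G t m k sb * (G t p r rb * (h t p m : ℂ)
            * deriv (fun x => d x r k) t * star (d t rb sb)))
        + (∑ k : Fin 2, ∑ sb : Fin 2, ∑ m : Fin 4, ∑ r : Fin 2, ∑ rb : Fin 2, ∑ p : Fin 4,
          G t m k sb * (G t p r rb * (h t p m : ℂ)
            * d t r k * deriv (fun x => star (d x rb sb)) t)) := by
    simp only [hderivS]
    simp only [Finset.mul_sum, mul_add, Finset.sum_add_distrib]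
  -- final assembly
  have hBsum : (∑ k : Fin 2, ∑ sb : Fin 2, ∑ m : Fin 4,
        G t m k sb * deriv (fun x => S x m k sb) t)
      = (∑ k : Fin 2, ∑ sb : Fin 2, ∑ m : Fin 4, deriv (fun x => G x m k sb) t * S t m k sb)
        - 2 * (∑ n : Fin 4, ∑ m : Fin 4,
            (h t n m : ℂ) * ((deriv (fun x => g x n m) t : ℝ) : ℂ))
        + 4 * (∑ s : Fin 2, ∑ u : Fin 2, deriv (fun x => d x s u) t * e t u s)
        + 4 * (∑ sb : Fin 2, ∑ ub : Fin 2,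
            deriv (fun x => star (d x sb ub)) t * star (e t ub sb)) := by
    rw [hsplit, hT1, hT2, hT3, hT4]; ring
  have hgoalC : (∑ n : Fin 4, ∑ m : Fin 4, (h t n m : ℂ) * deriv (fun x => ((g x n m : ℝ) : ℂ)) t)
      = ∑ n : Fin 4, ∑ m : Fin 4, (h t n m : ℂ) * ((deriv (fun x => g x n m) t : ℝ) : ℂ) := by
    refine Finset.sum_congr rfl fun n _ => Finset.sum_congr rfl fun m _ => ?_
    rw [hgderivC n m]
  rw [hgoalC]
  linear_combination (hBsum + hAB) / 2
end

section
/- The spinor connection coefficients A defined by the explicit formula satisfy the spinor-metric concordance condition (∇d = 0 in the given frame direction): for all i, j ∈ {1,2} and all t ∈ ℝ, (d_{i,j})' − Σ_{k=1}^{2} A^k_i d_{k,j} − Σ_{k=1}^{2} A^k_j d_{i,k} = 0. -/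
open Finset

set_option maxHeartbeats 4000000

noncomputable def Bm (G : ℝ → Fin 4 → Fin 2 → Fin 2 → ℂ) (d : ℝ → Fin 2 → Fin 2 → ℂ)
    (x : ℝ) (p : Fin 4) (s sb : Fin 2) : ℂ :=
  ∑ r : Fin 2, ∑ rb : Fin 2, G x p r rb * d x r s * star (d x rb sb)

/-- The spinor connection coefficients `A^i_j` given by the explicit formula
satisfy the spinor-metric concordance condition `∇d = 0` along the given
frame direction:
`(d_{i,j})' - Σ_k A^k_i d_{k,j} - Σ_k A^k_j d_{i,k} = 0`. -/
theorem spinor_connection_metric_concordance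
    (g h : ℝ → Fin 4 → Fin 4 → ℝ)
    (hg_symm : ∀ t i j, g t i j = g t j i)
    (hg_diff : ∀ i j, Differentiable ℝ (fun t => g t i j))
    (hgh : ∀ t p q, ∑ r : Fin 4, g t p r * h t r q = if p = q then (1 : ℝ) else 0)
    (d e : ℝ → Fin 2 → Fin 2 → ℂ)
    (hd_diff : ∀ i j, Differentiable ℝ (fun t => d t i j))
    (hd_skew : ∀ t i j, d t i j = - d t j i)
    (hde : ∀ t j i, ∑ r : Fin 2, d t j r * e t r i = if j = i then (1 : ℂ) else 0)
    (G : ℝ → Fin 4 → Fin 2 → Fin 2 → ℂ)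
    (hG_diff : ∀ p i j, Differentiable ℝ (fun t => G t p i j))
    (S : ℝ → Fin 4 → Fin 2 → Fin 2 → ℂ)
    (hS : ∀ t q s sb, S t q s sb
      = ∑ r : Fin 2, ∑ rb : Fin 2, ∑ p : Fin 4,
          G t p r rb * (h t p q : ℂ) * d t r s * star (d t rb sb))
    (hquad1 : ∀ t p q, ∑ r : Fin 2, ∑ rb : Fin 2, G t p r rb * S t q r rb
      = 2 * (if p = q then (1 : ℂ) else 0))
    (hquad2 : ∀ t (r rb s sb : Fin 2), ∑ q : Fin 4, G t q r rb * S t q s sb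
      = 2 * (if r = s then (1 : ℂ) else 0) * (if rb = sb then (1 : ℂ) else 0))
    (Γ : ℝ → Fin 4 → Fin 4 → ℝ)
    (hΓ_compat : ∀ t p q,
      (∑ a : Fin 4, g t p a * Γ t a q) + (∑ a : Fin 4, g t q a * Γ t a p)
        = deriv (fun x => g x p q) t)
    (A : ℝ → Fin 2 → Fin 2 → ℂ)
    (hA : ∀ t i j, A t i j
      = (1 / 4) * (∑ sb : Fin 2, ∑ p : Fin 4, ∑ q : Fin 4,
            G t p i sb * (Γ t p q : ℂ) * S t q j sb)
        - (1 / 4) * (∑ sb : Fin 2, ∑ q : Fin 4,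
            deriv (fun x => G x q i sb) t * S t q j sb)
        - (1 / 4) * (∑ ib : Fin 2, ∑ jb : Fin 2,
            deriv (fun x => star (d x jb ib)) t * star (e t ib jb))
          * (if i = j then (1 : ℂ) else 0))
    : ∀ (i j : Fin 2) (t : ℝ),
      deriv (fun x => d x i j) t
        - (∑ k : Fin 2, A t k i * d t k j)
        - (∑ k : Fin 2, A t k j * d t i k) = 0 := by
  intro i j t
  -- basic pointwise facts about d
  have hd00 : ∀ x, d x 0 0 = 0 := fun x => by linear_combination (hd_skew x 0 0) / 2
  have hd11 : ∀ x, d x 1 1 = 0 := fun x => by linear_combination (hd_skew x 1 1) / 2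
  have hd10 : ∀ x, d x 1 0 = - d x 0 1 := fun x => hd_skew x 1 0
  have hder00 : deriv (fun x => d x 0 0) t = 0 := by
    rw [show (fun x => d x 0 0) = (fun _ : ℝ => (0:ℂ)) from funext hd00]
    exact deriv_const t 0
  have hder11 : deriv (fun x => d x 1 1) t = 0 := by
    rw [show (fun x => d x 1 1) = (fun _ : ℝ => (0:ℂ)) from funext hd11]
    exact deriv_const t 0
  have hder10 : deriv (fun x => d x 1 0) t = - deriv (fun x => d x 0 1) t := by
    rw [show (fun x => d x 1 0) = (fun x => -(d x 0 1)) from funext hd10]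
    exact deriv.neg
  have hds00 : deriv (fun x => star (d x 0 0)) t = 0 := by
    rw [show (fun x => star (d x 0 0)) = (fun _ : ℝ => (0:ℂ)) from funext fun x => by
      rw [hd00 x, star_zero]]
    exact deriv_const t 0
  have hds11 : deriv (fun x => star (d x 1 1)) t = 0 := by
    rw [show (fun x => star (d x 1 1)) = (fun _ : ℝ => (0:ℂ)) from funext fun x => by
      rw [hd11 x, star_zero]]
    exact deriv_const t 0
  have hds01 : deriv (fun x => star (d x 0 1)) t = star (deriv (fun x => d x 0 1) t) :=
    deriv.star
  have hds10 : deriv (fun x => star (d x 1 0)) t = - star (deriv (fun x => d x 0 1) t) := by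
    rw [show (fun x => star (d x 1 0)) = (fun x => -(star (d x 0 1))) from funext fun x => by
      rw [hd10 x, star_neg]]
    rw [deriv.fun_neg, hds01]
  -- e values
  have he10 : d t 0 1 * e t 1 0 = 1 := by
    have h1 := hde t 0 0
    simp only [Fin.sum_univ_two, hd00, if_true] at h1
    linear_combination h1
  have hane : d t 0 1 ≠ 0 := left_ne_zero_of_mul_eq_one he10
  have hbne : star (d t 0 1) ≠ 0 := star_ne_zero.mpr hane
  have he00 : e t 0 0 = 0 := by
    have h2 := hde t 1 0
    simp only [Fin.sum_univ_two, hd11, hd10] at h2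
    rw [if_neg (by decide : ¬ ((1:Fin 2) = 0))] at h2
    have h3 : d t 0 1 * e t 0 0 = 0 := by linear_combination - h2
    exact (mul_eq_zero.mp h3).resolve_left hane
  have he11 : e t 1 1 = 0 := by
    have h2 := hde t 0 1
    simp only [Fin.sum_univ_two, hd00] at h2
    rw [if_neg (by decide : ¬ ((0:Fin 2) = 1))] at h2
    have h3 : d t 0 1 * e t 1 1 = 0 := by linear_combination h2
    exact (mul_eq_zero.mp h3).resolve_left hane
  have he01 : d t 0 1 * e t 0 1 = -1 := by
    have h2 := hde t 1 1
    simp only [Fin.sum_univ_two, hd11, hd10, if_true] at h2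
    linear_combination - h2
  have hse10 : star (d t 0 1) * star (e t 1 0) = 1 := by
    have h4 := congrArg star he10
    rw [star_mul, star_one] at h4
    linear_combination h4
  have hse01 : star (d t 0 1) * star (e t 0 1) = -1 := by
    have h4 := congrArg star he01
    rw [star_mul] at h4
    simp only [star_neg, star_one] at h4
    linear_combination h4
  -- matrix facts for g, h
  have hGH : ∀ x, (Matrix.of (g x)) * (Matrix.of (h x)) = 1 := by
    intro x; ext p q
    simp only [Matrix.mul_apply, Matrix.of_apply, Matrix.one_apply]
    exact hgh x p q
  have hHG : ∀ x, (Matrix.of (h x)) * (Matrix.of (g x)) = 1 :=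
    fun x => mul_eq_one_comm.mp (hGH x)
  have hhgE : ∀ x p q, (∑ r : Fin 4, h x p r * g x r q) = if p = q then (1:ℝ) else 0 := by
    intro x p q
    have h5 := congrFun (congrFun (hHG x) p) q
    simpa [Matrix.mul_apply, Matrix.one_apply] using h5
  have hgT : ∀ x, Matrix.transpose (Matrix.of (g x)) = Matrix.of (g x) := by
    intro x; ext p q; exact hg_symm x q p
  have hsymT : ∀ x, Matrix.transpose (Matrix.of (h x)) = Matrix.of (h x) := by
    intro x
    calc Matrix.transpose (Matrix.of (h x))
        = Matrix.transpose (Matrix.of (h x)) * ((Matrix.of (g x)) * (Matrix.of (h x))) := by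
          rw [hGH x, mul_one]
      _ = (Matrix.transpose (Matrix.of (g x) * Matrix.of (h x))) * (Matrix.of (h x)) := by
          rw [Matrix.transpose_mul, hgT x, mul_assoc]
      _ = Matrix.of (h x) := by rw [hGH x, Matrix.transpose_one, one_mul]
  have hsymm : ∀ x p q, h x p q = h x q p := by
    intro x p q
    have h6 := congrFun (congrFun (hsymT x) q) p
    simpa [Matrix.transpose_apply] using h6
  have hsymC : ∀ (x : ℝ) (p q : Fin 4), ((h x p q : ℝ):ℂ) = ((h x q p : ℝ):ℂ) :=
    fun x p q => congrArg Complex.ofReal (hsymm x p q)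
  have hhgC : ∀ (x:ℝ) (u p : Fin 4),
      (∑ m : Fin 4, ((h x u m : ℝ):ℂ) * ((g x m p : ℝ):ℂ)) = if u = p then (1:ℂ) else 0 := by
    intro x u p
    have h7 := congrArg Complex.ofReal (hhgE x u p)
    push_cast at h7
    convert h7 using 1
    split <;> simp
  -- S in terms of B
  have hSBs : ∀ (x:ℝ) (q : Fin 4) (s sb : Fin 2),
      S x q s sb = ∑ p : Fin 4, ((h x p q : ℝ):ℂ) * Bm G d x p s sb := by
    intro x q s sb
    rw [hS x q s sb]
    simp only [Bm, Fin.sum_univ_two, Fin.sum_univ_four]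
    ring
  have hSB2s : ∀ (x:ℝ) (q : Fin 4) (s sb : Fin 2),
      S x q s sb = ∑ m : Fin 4, ((h x q m : ℝ):ℂ) * Bm G d x m s sb := by
    intro x q s sb
    rw [hSBs x q s sb]
    exact Finset.sum_congr rfl fun m _ => by rw [hsymC x m q]
  have hBS : ∀ (x:ℝ) (p:Fin 4) (s sb : Fin 2),
      Bm G d x p s sb = ∑ m : Fin 4, ((g x m p:ℝ):ℂ) * S x m s sb := by
    intro x p s sb
    symm
    calc ∑ m : Fin 4, ((g x m p:ℝ):ℂ) * S x m s sb
        = ∑ m : Fin 4, ∑ u : Fin 4, ((g x m p:ℝ):ℂ) * (((h x u m:ℝ):ℂ) * Bm G d x u s sb) := by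
          refine Finset.sum_congr rfl fun m _ => ?_
          rw [hSBs x m s sb, Finset.mul_sum]
      _ = ∑ u : Fin 4, (∑ m : Fin 4, ((h x u m:ℝ):ℂ) * ((g x m p:ℝ):ℂ)) * Bm G d x u s sb := by
          rw [Finset.sum_comm]
          refine Finset.sum_congr rfl fun u _ => ?_
          rw [Finset.sum_mul]
          exact Finset.sum_congr rfl fun m _ => by ring
      _ = ∑ u : Fin 4, (if u = p then (1:ℂ) else 0) * Bm G d x u s sb := by
          exact Finset.sum_congr rfl fun u _ => by rw [hhgC x u p]
      _ = Bm G d x p s sb := by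
          simp [ite_mul]
  have KB : ∀ (x:ℝ) (q p : Fin 4),
      (∑ i : Fin 2, ∑ sb : Fin 2, G x q i sb * Bm G d x p i sb) = 2 * ((g x q p:ℝ):ℂ) := by
    intro x q p
    calc (∑ i : Fin 2, ∑ sb : Fin 2, G x q i sb * Bm G d x p i sb)
        = ∑ i : Fin 2, ∑ sb : Fin 2, ∑ m : Fin 4, ((g x m p:ℝ):ℂ) * (G x q i sb * S x m i sb) := by
          refine Finset.sum_congr rfl fun i _ => Finset.sum_congr rfl fun sb _ => ?_
          rw [hBS x p i sb, Finset.mul_sum]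
          exact Finset.sum_congr rfl fun m _ => by ring
      _ = ∑ i : Fin 2, ∑ m : Fin 4, ∑ sb : Fin 2, ((g x m p:ℝ):ℂ) * (G x q i sb * S x m i sb) := by
          exact Finset.sum_congr rfl fun i _ => Finset.sum_comm
      _ = ∑ m : Fin 4, ∑ i : Fin 2, ∑ sb : Fin 2, ((g x m p:ℝ):ℂ) * (G x q i sb * S x m i sb) :=
          Finset.sum_comm
      _ = ∑ m : Fin 4, ((g x m p:ℝ):ℂ) * (∑ i : Fin 2, ∑ sb : Fin 2, G x q i sb * S x m i sb) := by
          refine Finset.sum_congr rfl fun m _ => ?_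
          rw [Finset.mul_sum]
          exact Finset.sum_congr rfl fun i _ => by rw [Finset.mul_sum]
      _ = ∑ m : Fin 4, ((g x m p:ℝ):ℂ) * (2 * (if q = m then (1:ℂ) else 0)) := by
          exact Finset.sum_congr rfl fun m _ => by rw [hquad1 x q m]
      _ = 2 * ((g x q p:ℝ):ℂ) := by
          simp [mul_ite, Finset.sum_ite_eq]
          ring
  -- derivative machinery
  have hd' : ∀ r s, HasDerivAt (fun x => d x r s) (deriv (fun x => d x r s) t) t :=
    fun r s => ((hd_diff r s) t).hasDerivAt
  have hds' : ∀ r s, HasDerivAt (fun x => star (d x r s)) (star (deriv (fun x => d x r s) t)) t :=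
    fun r s => (hd' r s).star
  have hG' : ∀ p r s, HasDerivAt (fun x => G x p r s) (deriv (fun x => G x p r s) t) t :=
    fun p r s => ((hG_diff p r s) t).hasDerivAt
  have hBd : ∀ p s sb, HasDerivAt (fun x => Bm G d x p s sb)
      (∑ r : Fin 2, ∑ rb : Fin 2,
        (deriv (fun x => G x p r rb) t * d t r s * star (d t rb sb)
         + G t p r rb * deriv (fun x => d x r s) t * star (d t rb sb)
         + G t p r rb * d t r s * star (deriv (fun x => d x rb sb) t))) t := by
    intro p s sb
    have H := ((((hG' p 0 0).mul (hd' 0 s)).mul (hds' 0 sb)).add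
               (((hG' p 0 1).mul (hd' 0 s)).mul (hds' 1 sb))).add
              ((((hG' p 1 0).mul (hd' 1 s)).mul (hds' 0 sb)).add
               (((hG' p 1 1).mul (hd' 1 s)).mul (hds' 1 sb)))
    have hfun : (fun x => Bm G d x p s sb)
        = (fun x => (G x p 0 0 * d x 0 s * star (d x 0 sb) + G x p 0 1 * d x 0 s * star (d x 1 sb))
            + (G x p 1 0 * d x 1 s * star (d x 0 sb) + G x p 1 1 * d x 1 s * star (d x 1 sb))) := by
      funext x; simp [Bm, Fin.sum_univ_two]
    rw [hfun, show (∑ r : Fin 2, ∑ rb : Fin 2,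
        (deriv (fun x => G x p r rb) t * d t r s * star (d t rb sb)
         + G t p r rb * deriv (fun x => d x r s) t * star (d t rb sb)
         + G t p r rb * d t r s * star (deriv (fun x => d x rb sb) t)))
      = ((deriv (fun x => G x p 0 0) t * d t 0 s + G t p 0 0 * deriv (fun x => d x 0 s) t) * star (d t 0 sb)
          + G t p 0 0 * d t 0 s * star (deriv (fun x => d x 0 sb) t)
         + ((deriv (fun x => G x p 0 1) t * d t 0 s + G t p 0 1 * deriv (fun x => d x 0 s) t) * star (d t 1 sb)
          + G t p 0 1 * d t 0 s * star (deriv (fun x => d x 1 sb) t))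
         + (((deriv (fun x => G x p 1 0) t * d t 1 s + G t p 1 0 * deriv (fun x => d x 1 s) t) * star (d t 0 sb)
          + G t p 1 0 * d t 1 s * star (deriv (fun x => d x 0 sb) t))
          + ((deriv (fun x => G x p 1 1) t * d t 1 s + G t p 1 1 * deriv (fun x => d x 1 s) t) * star (d t 1 sb)
          + G t p 1 1 * d t 1 s * star (deriv (fun x => d x 1 sb) t)))) from by
        simp [Fin.sum_univ_two]; ring]
    exact H
  have EQ : ∀ q p : Fin 4,
      ((deriv (fun x => G x q 0 0) t * Bm G d t p 0 0 + G t q 0 0 * (deriv (fun x => G x p 1 1) t * (d t 0 1 * star (d t 0 1)) + G t p 1 1 * (deriv (fun x => d x 0 1) t) * star (d t 0 1) + G t p 1 1 * d t 0 1 * star (deriv (fun x => d x 0 1) t))) + (deriv (fun x => G x q 0 1) t * Bm G d t p 0 1 - G t q 0 1 * (deriv (fun x => G x p 1 0) t * (d t 0 1 * star (d t 0 1)) + G t p 1 0 * (deriv (fun x => d x 0 1) t) * star (d t 0 1) + G t p 1 0 * d t 0 1 * star (deriv (fun x => d x 0 1) t))) + (deriv (fun x => G x q 1 0) t * Bm G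 d t p 1 0 - G t q 1 0 * (deriv (fun x => G x p 0 1) t * (d t 0 1 * star (d t 0 1)) + G t p 0 1 * (deriv (fun x => d x 0 1) t) * star (d t 0 1) + G t p 0 1 * d t 0 1 * star (deriv (fun x => d x 0 1) t))) + (deriv (fun x => G x q 1 1) t * Bm G d t p 1 1 + G t q 1 1 * (deriv (fun x => G x p 0 0) t * (d t 0 1 * star (d t 0 1)) + G t p 0 0 * (deriv (fun x => d x 0 1) t) * star (d t 0 1) + G t p 0 0 * d t 0 1 * star (deriv (fun x => d x 0 1) t))))
      = 2 * ((deriv (fun x => g x q p) t : ℝ) : ℂ) := by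
    intro q p
    have H := (((hG' q 0 0).mul (hBd p 0 0)).add ((hG' q 0 1).mul (hBd p 0 1))).add
              (((hG' q 1 0).mul (hBd p 1 0)).add ((hG' q 1 1).mul (hBd p 1 1)))
    have hfun2 : (fun x => ((fun x => G x q 0 0) x * (fun x => Bm G d x p 0 0) x
          + (fun x => G x q 0 1) x * (fun x => Bm G d x p 0 1) x)
          + ((fun x => G x q 1 0) x * (fun x => Bm G d x p 1 0) x
          + (fun x => G x q 1 1) x * (fun x => Bm G d x p 1 1) x))
        = (fun x => 2 * ((g x q p : ℝ) : ℂ)) := by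
      funext x
      have h8 := KB x q p
      simp only [Fin.sum_univ_two] at h8
      linear_combination h8
    simp only [Pi.mul_def, Pi.add_def] at H
    rw [hfun2] at H
    have H2 : HasDerivAt (fun x => 2 * ((g x q p : ℝ) : ℂ))
        (2 * ((deriv (fun x => g x q p) t : ℝ) : ℂ)) t :=
      ((hg_diff q p) t).hasDerivAt.ofReal_comp.const_mul (2:ℂ)
    have hu := H.unique H2
    simp only [Fin.sum_univ_two, hder00, hder11, hder10, hd00 t, hd11 t, hd10 t,
      star_neg, star_zero] at hu
    linear_combination hu
  have hBval00 : ∀ p : Fin 4, Bm G d t p 0 0 = G t p 1 1 * (d t 0 1 * star (d t 0 1)) := by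
    intro p
    simp only [Bm, Fin.sum_univ_two, hd00 t, hd11 t, hd10 t, star_neg, star_zero]
    ring
  have hBval01 : ∀ p : Fin 4, Bm G d t p 0 1 = -(G t p 1 0 * (d t 0 1 * star (d t 0 1))) := by
    intro p
    simp only [Bm, Fin.sum_univ_two, hd00 t, hd11 t, hd10 t, star_neg, star_zero]
    ring
  have hBval10 : ∀ p : Fin 4, Bm G d t p 1 0 = -(G t p 0 1 * (d t 0 1 * star (d t 0 1))) := by
    intro p
    simp only [Bm, Fin.sum_univ_two, hd00 t, hd11 t, hd10 t, star_neg, star_zero]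
    ring
  have hBval11 : ∀ p : Fin 4, Bm G d t p 1 1 = G t p 0 0 * (d t 0 1 * star (d t 0 1)) := by
    intro p
    simp only [Bm, Fin.sum_univ_two, hd00 t, hd11 t, hd10 t, star_neg, star_zero]
    ring
  have L1 : (G t 0 0 0 * ((Γ t 0 0 : ℝ) : ℂ) * S t 0 0 0 + G t 0 0 0 * ((Γ t 0 1 : ℝ) : ℂ) * S t 1 0 0 + G t 0 0 0 * ((Γ t 0 2 : ℝ) : ℂ) * S t 2 0 0 + G t 0 0 0 * ((Γ t 0 3 : ℝ) : ℂ) * S t 3 0 0 + G t 1 0 0 * ((Γ t 1 0 : ℝ) : ℂ) * S t 0 0 0 + G t 1 0 0 * ((Γ t 1 1 : ℝ) : ℂ) * S t 1 0 0 + G t 1 0 0 * ((Γ t 1 2 : ℝ) : ℂ) * S t 2 0 0 + G t 1 0 0 * ((Γ t 1 3 : ℝ) : ℂ) * S t 3 0 0 + G t 2 0 0 * ((Γ t 2 0 : ℝ) : ℂ) * S t 0 0 0 + G t 2 0 0 * ((Γ t 2 1 : ℝ) : ℂ) * S t 1 0 0 + G t 2 0 0 * ((Γ t 2 2 : ℝ)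 : ℂ) * S t 2 0 0 + G t 2 0 0 * ((Γ t 2 3 : ℝ) : ℂ) * S t 3 0 0 + G t 3 0 0 * ((Γ t 3 0 : ℝ) : ℂ) * S t 0 0 0 + G t 3 0 0 * ((Γ t 3 1 : ℝ) : ℂ) * S t 1 0 0 + G t 3 0 0 * ((Γ t 3 2 : ℝ) : ℂ) * S t 2 0 0 + G t 3 0 0 * ((Γ t 3 3 : ℝ) : ℂ) * S t 3 0 0 + G t 0 0 1 * ((Γ t 0 0 : ℝ) : ℂ) * S t 0 0 1 + G t 0 0 1 * ((Γ t 0 1 : ℝ) : ℂ) * S t 1 0 1 + G t 0 0 1 * ((Γ t 0 2 : ℝ) : ℂ) * S t 2 0 1 + G t 0 0 1 * ((Γ t 0 3 : ℝ) : ℂ) * S t 3 0 1 + G t 1 0 1 * ((Γ t 1 0 : ℝ) : ℂ) * S t 0 0 1 + G t 1 0 1 * ((Γ t 1 1 : ℝ) : ℂ) * S t 1 0 1 + G t 1 0 1 * ((Γ t 1 2 : ℝ) : ℂ) * S t 2 0 1 + G t 1 0 1 * ((Γ t 1 3 : ℝ) : ℂ) * S t 3 0 1 + G t 2 0 1 *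 ((Γ t 2 0 : ℝ) : ℂ) * S t 0 0 1 + G t 2 0 1 * ((Γ t 2 1 : ℝ) : ℂ) * S t 1 0 1 + G t 2 0 1 * ((Γ t 2 2 : ℝ) : ℂ) * S t 2 0 1 + G t 2 0 1 * ((Γ t 2 3 : ℝ) : ℂ) * S t 3 0 1 + G t 3 0 1 * ((Γ t 3 0 : ℝ) : ℂ) * S t 0 0 1 + G t 3 0 1 * ((Γ t 3 1 : ℝ) : ℂ) * S t 1 0 1 + G t 3 0 1 * ((Γ t 3 2 : ℝ) : ℂ) * S t 2 0 1 + G t 3 0 1 * ((Γ t 3 3 : ℝ) : ℂ) * S t 3 0 1 + G t 0 1 0 * ((Γ t 0 0 : ℝ) : ℂ) * S t 0 1 0 + G t 0 1 0 * ((Γ t 0 1 : ℝ) : ℂ) * S t 1 1 0 + G t 0 1 0 * ((Γ t 0 2 : ℝ) : ℂ) * S t 2 1 0 + G t 0 1 0 * ((Γ t 0 3 : ℝ) : ℂ) * S t 3 1 0 + G t 1 1 0 * ((Γ t 1 0 : ℝ) : ℂ) * S t 0 1 0 + G t 1 1 0 * ((Γ t 1 1 : ℝ) : ℂ) * S t 1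 1 0 + G t 1 1 0 * ((Γ t 1 2 : ℝ) : ℂ) * S t 2 1 0 + G t 1 1 0 * ((Γ t 1 3 : ℝ) : ℂ) * S t 3 1 0 + G t 2 1 0 * ((Γ t 2 0 : ℝ) : ℂ) * S t 0 1 0 + G t 2 1 0 * ((Γ t 2 1 : ℝ) : ℂ) * S t 1 1 0 + G t 2 1 0 * ((Γ t 2 2 : ℝ) : ℂ) * S t 2 1 0 + G t 2 1 0 * ((Γ t 2 3 : ℝ) : ℂ) * S t 3 1 0 + G t 3 1 0 * ((Γ t 3 0 : ℝ) : ℂ) * S t 0 1 0 + G t 3 1 0 * ((Γ t 3 1 : ℝ) : ℂ) * S t 1 1 0 + G t 3 1 0 * ((Γ t 3 2 : ℝ) : ℂ) * S t 2 1 0 + G t 3 1 0 * ((Γ t 3 3 : ℝ) : ℂ) * S t 3 1 0 + G t 0 1 1 * ((Γ t 0 0 : ℝ) : ℂ) * S t 0 1 1 + G t 0 1 1 * ((Γ t 0 1 : ℝ) : ℂ) * S t 1 1 1 + G t 0 1 1 * ((Γ t 0 2 : ℝ) : ℂ) * S t 2 1 1 + G t 0 1 1 * ((Γ t 0 3 :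 ℝ) : ℂ) * S t 3 1 1 + G t 1 1 1 * ((Γ t 1 0 : ℝ) : ℂ) * S t 0 1 1 + G t 1 1 1 * ((Γ t 1 1 : ℝ) : ℂ) * S t 1 1 1 + G t 1 1 1 * ((Γ t 1 2 : ℝ) : ℂ) * S t 2 1 1 + G t 1 1 1 * ((Γ t 1 3 : ℝ) : ℂ) * S t 3 1 1 + G t 2 1 1 * ((Γ t 2 0 : ℝ) : ℂ) * S t 0 1 1 + G t 2 1 1 * ((Γ t 2 1 : ℝ) : ℂ) * S t 1 1 1 + G t 2 1 1 * ((Γ t 2 2 : ℝ) : ℂ) * S t 2 1 1 + G t 2 1 1 * ((Γ t 2 3 : ℝ) : ℂ) * S t 3 1 1 + G t 3 1 1 * ((Γ t 3 0 : ℝ) : ℂ) * S t 0 1 1 + G t 3 1 1 * ((Γ t 3 1 : ℝ) : ℂ) * S t 1 1 1 + G t 3 1 1 * ((Γ t 3 2 : ℝ) : ℂ) * S t 2 1 1 + G t 3 1 1 * ((Γ t 3 3 : ℝ) : ℂ) * S t 3 1 1)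
      = 2 * (((Γ t 0 0 : ℝ) : ℂ) + ((Γ t 1 1 : ℝ) : ℂ) + ((Γ t 2 2 : ℝ) : ℂ) + ((Γ t 3 3 : ℝ) : ℂ)) := by
    have q1_0_0 := hquad1 t 0 0
    simp only [Fin.sum_univ_two] at q1_0_0
    simp only [if_true, mul_one] at q1_0_0
    have q1_0_1 := hquad1 t 0 1
    simp only [Fin.sum_univ_two] at q1_0_1
    rw [if_neg (by decide : ¬ ((0:Fin 4) = 1)), mul_zero] at q1_0_1
    have q1_0_2 := hquad1 t 0 2
    simp only [Fin.sum_univ_two] at q1_0_2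
    rw [if_neg (by decide : ¬ ((0:Fin 4) = 2)), mul_zero] at q1_0_2
    have q1_0_3 := hquad1 t 0 3
    simp only [Fin.sum_univ_two] at q1_0_3
    rw [if_neg (by decide : ¬ ((0:Fin 4) = 3)), mul_zero] at q1_0_3
    have q1_1_0 := hquad1 t 1 0
    simp only [Fin.sum_univ_two] at q1_1_0
    rw [if_neg (by decide : ¬ ((1:Fin 4) = 0)), mul_zero] at q1_1_0
    have q1_1_1 := hquad1 t 1 1
    simp only [Fin.sum_univ_two] at q1_1_1
    simp only [if_true, mul_one] at q1_1_1
    have q1_1_2 := hquad1 t 1 2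
    simp only [Fin.sum_univ_two] at q1_1_2
    rw [if_neg (by decide : ¬ ((1:Fin 4) = 2)), mul_zero] at q1_1_2
    have q1_1_3 := hquad1 t 1 3
    simp only [Fin.sum_univ_two] at q1_1_3
    rw [if_neg (by decide : ¬ ((1:Fin 4) = 3)), mul_zero] at q1_1_3
    have q1_2_0 := hquad1 t 2 0
    simp only [Fin.sum_univ_two] at q1_2_0
    rw [if_neg (by decide : ¬ ((2:Fin 4) = 0)), mul_zero] at q1_2_0
    have q1_2_1 := hquad1 t 2 1
    simp only [Fin.sum_univ_two] at q1_2_1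
    rw [if_neg (by decide : ¬ ((2:Fin 4) = 1)), mul_zero] at q1_2_1
    have q1_2_2 := hquad1 t 2 2
    simp only [Fin.sum_univ_two] at q1_2_2
    simp only [if_true, mul_one] at q1_2_2
    have q1_2_3 := hquad1 t 2 3
    simp only [Fin.sum_univ_two] at q1_2_3
    rw [if_neg (by decide : ¬ ((2:Fin 4) = 3)), mul_zero] at q1_2_3
    have q1_3_0 := hquad1 t 3 0
    simp only [Fin.sum_univ_two] at q1_3_0
    rw [if_neg (by decide : ¬ ((3:Fin 4) = 0)), mul_zero] at q1_3_0
    have q1_3_1 := hquad1 t 3 1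
    simp only [Fin.sum_univ_two] at q1_3_1
    rw [if_neg (by decide : ¬ ((3:Fin 4) = 1)), mul_zero] at q1_3_1
    have q1_3_2 := hquad1 t 3 2
    simp only [Fin.sum_univ_two] at q1_3_2
    rw [if_neg (by decide : ¬ ((3:Fin 4) = 2)), mul_zero] at q1_3_2
    have q1_3_3 := hquad1 t 3 3
    simp only [Fin.sum_univ_two] at q1_3_3
    simp only [if_true, mul_one] at q1_3_3
    linear_combination ((Γ t 0 0 : ℝ) : ℂ) * q1_0_0 + ((Γ t 0 1 : ℝ) : ℂ) * q1_0_1 + ((Γ t 0 2 : ℝ) : ℂ) * q1_0_2 + ((Γ t 0 3 : ℝ) : ℂ) * q1_0_3 + ((Γ t 1 0 : ℝ) : ℂ) * q1_1_0 + ((Γ t 1 1 : ℝ) : ℂ) * q1_1_1 + ((Γ t 1 2 : ℝ) : ℂ) * q1_1_2 + ((Γ t 1 3 : ℝ) : ℂ) * q1_1_3 + ((Γ t 2 0 : ℝ) : ℂ) * q1_2_0 + ((Γ t 2 1 : ℝ) : ℂ) * q1_2_1 + ((Γ t 2 2 : ℝ) : ℂ) * q1_2_2 + ((Γ t 2 3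 : ℝ) : ℂ) * q1_2_3 + ((Γ t 3 0 : ℝ) : ℂ) * q1_3_0 + ((Γ t 3 1 : ℝ) : ℂ) * q1_3_1 + ((Γ t 3 2 : ℝ) : ℂ) * q1_3_2 + ((Γ t 3 3 : ℝ) : ℂ) * q1_3_3
  have L2 : (h t 0 0 * deriv (fun x => g x 0 0) t + h t 0 1 * deriv (fun x => g x 1 0) t + h t 0 2 * deriv (fun x => g x 2 0) t + h t 0 3 * deriv (fun x => g x 3 0) t + h t 1 0 * deriv (fun x => g x 0 1) t + h t 1 1 * deriv (fun x => g x 1 1) t + h t 1 2 * deriv (fun x => g x 2 1) t + h t 1 3 * deriv (fun x => g x 3 1) t + h t 2 0 * deriv (fun x => g x 0 2) t + h t 2 1 * deriv (fun x => g x 1 2) t + h t 2 2 * deriv (fun x => g x 2 2) t + h t 2 3 * deriv (fun x => g x 3 2) t + h t 3 0 * deriv (fun x => g x 0 3) t + h t 3 1 * deriv (fun x => g x 1 3) t + h t 3 2 * deriv (fun x => g x 2 3) t + h t 3 3 * deriv (fun x => g x 3 3) t)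
      = 2 * (Γ t 0 0 + Γ t 1 1 + Γ t 2 2 + Γ t 3 3) := by
    have hc_0_0 := hΓ_compat t 0 0
    simp only [Fin.sum_univ_four] at hc_0_0
    have hc_0_1 := hΓ_compat t 0 1
    simp only [Fin.sum_univ_four] at hc_0_1
    have hc_0_2 := hΓ_compat t 0 2
    simp only [Fin.sum_univ_four] at hc_0_2
    have hc_0_3 := hΓ_compat t 0 3
    simp only [Fin.sum_univ_four] at hc_0_3
    have hc_1_0 := hΓ_compat t 1 0
    simp only [Fin.sum_univ_four] at hc_1_0
    have hc_1_1 := hΓ_compat t 1 1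
    simp only [Fin.sum_univ_four] at hc_1_1
    have hc_1_2 := hΓ_compat t 1 2
    simp only [Fin.sum_univ_four] at hc_1_2
    have hc_1_3 := hΓ_compat t 1 3
    simp only [Fin.sum_univ_four] at hc_1_3
    have hc_2_0 := hΓ_compat t 2 0
    simp only [Fin.sum_univ_four] at hc_2_0
    have hc_2_1 := hΓ_compat t 2 1
    simp only [Fin.sum_univ_four] at hc_2_1
    have hc_2_2 := hΓ_compat t 2 2
    simp only [Fin.sum_univ_four] at hc_2_2
    have hc_2_3 := hΓ_compat t 2 3
    simp only [Fin.sum_univ_four] at hc_2_3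
    have hc_3_0 := hΓ_compat t 3 0
    simp only [Fin.sum_univ_four] at hc_3_0
    have hc_3_1 := hΓ_compat t 3 1
    simp only [Fin.sum_univ_four] at hc_3_1
    have hc_3_2 := hΓ_compat t 3 2
    simp only [Fin.sum_univ_four] at hc_3_2
    have hc_3_3 := hΓ_compat t 3 3
    simp only [Fin.sum_univ_four] at hc_3_3
    have k2_0_0 := hhgE t 0 0
    simp only [Fin.sum_univ_four] at k2_0_0
    simp only [if_true] at k2_0_0
    have k2_0_1 := hhgE t 0 1
    simp only [Fin.sum_univ_four] at k2_0_1
    rw [if_neg (by decide : ¬ ((0:Fin 4) = 1))] at k2_0_1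
    have k2_0_2 := hhgE t 0 2
    simp only [Fin.sum_univ_four] at k2_0_2
    rw [if_neg (by decide : ¬ ((0:Fin 4) = 2))] at k2_0_2
    have k2_0_3 := hhgE t 0 3
    simp only [Fin.sum_univ_four] at k2_0_3
    rw [if_neg (by decide : ¬ ((0:Fin 4) = 3))] at k2_0_3
    have k2_1_0 := hhgE t 1 0
    simp only [Fin.sum_univ_four] at k2_1_0
    rw [if_neg (by decide : ¬ ((1:Fin 4) = 0))] at k2_1_0
    have k2_1_1 := hhgE t 1 1
    simp only [Fin.sum_univ_four] at k2_1_1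
    simp only [if_true] at k2_1_1
    have k2_1_2 := hhgE t 1 2
    simp only [Fin.sum_univ_four] at k2_1_2
    rw [if_neg (by decide : ¬ ((1:Fin 4) = 2))] at k2_1_2
    have k2_1_3 := hhgE t 1 3
    simp only [Fin.sum_univ_four] at k2_1_3
    rw [if_neg (by decide : ¬ ((1:Fin 4) = 3))] at k2_1_3
    have k2_2_0 := hhgE t 2 0
    simp only [Fin.sum_univ_four] at k2_2_0
    rw [if_neg (by decide : ¬ ((2:Fin 4) = 0))] at k2_2_0
    have k2_2_1 := hhgE t 2 1
    simp only [Fin.sum_univ_four] at k2_2_1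
    rw [if_neg (by decide : ¬ ((2:Fin 4) = 1))] at k2_2_1
    have k2_2_2 := hhgE t 2 2
    simp only [Fin.sum_univ_four] at k2_2_2
    simp only [if_true] at k2_2_2
    have k2_2_3 := hhgE t 2 3
    simp only [Fin.sum_univ_four] at k2_2_3
    rw [if_neg (by decide : ¬ ((2:Fin 4) = 3))] at k2_2_3
    have k2_3_0 := hhgE t 3 0
    simp only [Fin.sum_univ_four] at k2_3_0
    rw [if_neg (by decide : ¬ ((3:Fin 4) = 0))] at k2_3_0
    have k2_3_1 := hhgE t 3 1
    simp only [Fin.sum_univ_four] at k2_3_1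
    rw [if_neg (by decide : ¬ ((3:Fin 4) = 1))] at k2_3_1
    have k2_3_2 := hhgE t 3 2
    simp only [Fin.sum_univ_four] at k2_3_2
    rw [if_neg (by decide : ¬ ((3:Fin 4) = 2))] at k2_3_2
    have k2_3_3 := hhgE t 3 3
    simp only [Fin.sum_univ_four] at k2_3_3
    simp only [if_true] at k2_3_3
    have k1_0_0 := hhgE t 0 0
    simp only [Fin.sum_univ_four] at k1_0_0
    rw [hsymm t 0 0, hsymm t 0 1, hsymm t 0 2, hsymm t 0 3] at k1_0_0
    simp only [if_true] at k1_0_0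
    have k1_0_1 := hhgE t 0 1
    simp only [Fin.sum_univ_four] at k1_0_1
    rw [hsymm t 0 0, hsymm t 0 1, hsymm t 0 2, hsymm t 0 3] at k1_0_1
    rw [if_neg (by decide : ¬ ((0:Fin 4) = 1))] at k1_0_1
    have k1_0_2 := hhgE t 0 2
    simp only [Fin.sum_univ_four] at k1_0_2
    rw [hsymm t 0 0, hsymm t 0 1, hsymm t 0 2, hsymm t 0 3] at k1_0_2
    rw [if_neg (by decide : ¬ ((0:Fin 4) = 2))] at k1_0_2
    have k1_0_3 := hhgE t 0 3
    simp only [Fin.sum_univ_four] at k1_0_3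
    rw [hsymm t 0 0, hsymm t 0 1, hsymm t 0 2, hsymm t 0 3] at k1_0_3
    rw [if_neg (by decide : ¬ ((0:Fin 4) = 3))] at k1_0_3
    have k1_1_0 := hhgE t 1 0
    simp only [Fin.sum_univ_four] at k1_1_0
    rw [hsymm t 1 0, hsymm t 1 1, hsymm t 1 2, hsymm t 1 3] at k1_1_0
    rw [if_neg (by decide : ¬ ((1:Fin 4) = 0))] at k1_1_0
    have k1_1_1 := hhgE t 1 1
    simp only [Fin.sum_univ_four] at k1_1_1
    rw [hsymm t 1 0, hsymm t 1 1, hsymm t 1 2, hsymm t 1 3] at k1_1_1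
    simp only [if_true] at k1_1_1
    have k1_1_2 := hhgE t 1 2
    simp only [Fin.sum_univ_four] at k1_1_2
    rw [hsymm t 1 0, hsymm t 1 1, hsymm t 1 2, hsymm t 1 3] at k1_1_2
    rw [if_neg (by decide : ¬ ((1:Fin 4) = 2))] at k1_1_2
    have k1_1_3 := hhgE t 1 3
    simp only [Fin.sum_univ_four] at k1_1_3
    rw [hsymm t 1 0, hsymm t 1 1, hsymm t 1 2, hsymm t 1 3] at k1_1_3
    rw [if_neg (by decide : ¬ ((1:Fin 4) = 3))] at k1_1_3
    have k1_2_0 := hhgE t 2 0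
    simp only [Fin.sum_univ_four] at k1_2_0
    rw [hsymm t 2 0, hsymm t 2 1, hsymm t 2 2, hsymm t 2 3] at k1_2_0
    rw [if_neg (by decide : ¬ ((2:Fin 4) = 0))] at k1_2_0
    have k1_2_1 := hhgE t 2 1
    simp only [Fin.sum_univ_four] at k1_2_1
    rw [hsymm t 2 0, hsymm t 2 1, hsymm t 2 2, hsymm t 2 3] at k1_2_1
    rw [if_neg (by decide : ¬ ((2:Fin 4) = 1))] at k1_2_1
    have k1_2_2 := hhgE t 2 2
    simp only [Fin.sum_univ_four] at k1_2_2
    rw [hsymm t 2 0, hsymm t 2 1, hsymm t 2 2, hsymm t 2 3] at k1_2_2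
    simp only [if_true] at k1_2_2
    have k1_2_3 := hhgE t 2 3
    simp only [Fin.sum_univ_four] at k1_2_3
    rw [hsymm t 2 0, hsymm t 2 1, hsymm t 2 2, hsymm t 2 3] at k1_2_3
    rw [if_neg (by decide : ¬ ((2:Fin 4) = 3))] at k1_2_3
    have k1_3_0 := hhgE t 3 0
    simp only [Fin.sum_univ_four] at k1_3_0
    rw [hsymm t 3 0, hsymm t 3 1, hsymm t 3 2, hsymm t 3 3] at k1_3_0
    rw [if_neg (by decide : ¬ ((3:Fin 4) = 0))] at k1_3_0
    have k1_3_1 := hhgE t 3 1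
    simp only [Fin.sum_univ_four] at k1_3_1
    rw [hsymm t 3 0, hsymm t 3 1, hsymm t 3 2, hsymm t 3 3] at k1_3_1
    rw [if_neg (by decide : ¬ ((3:Fin 4) = 1))] at k1_3_1
    have k1_3_2 := hhgE t 3 2
    simp only [Fin.sum_univ_four] at k1_3_2
    rw [hsymm t 3 0, hsymm t 3 1, hsymm t 3 2, hsymm t 3 3] at k1_3_2
    rw [if_neg (by decide : ¬ ((3:Fin 4) = 2))] at k1_3_2
    have k1_3_3 := hhgE t 3 3
    simp only [Fin.sum_univ_four] at k1_3_3
    rw [hsymm t 3 0, hsymm t 3 1, hsymm t 3 2, hsymm t 3 3] at k1_3_3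
    simp only [if_true] at k1_3_3
    linear_combination - h t 0 0 * hc_0_0 - h t 0 1 * hc_1_0 - h t 0 2 * hc_2_0 - h t 0 3 * hc_3_0 - h t 1 0 * hc_0_1 - h t 1 1 * hc_1_1 - h t 1 2 * hc_2_1 - h t 1 3 * hc_3_1 - h t 2 0 * hc_0_2 - h t 2 1 * hc_1_2 - h t 2 2 * hc_2_2 - h t 2 3 * hc_3_2 - h t 3 0 * hc_0_3 - h t 3 1 * hc_1_3 - h t 3 2 * hc_2_3 - h t 3 3 * hc_3_3 + Γ t 0 0 * k2_0_0 + Γ t 1 0 * k2_0_1 + Γ t 2 0 * k2_0_2 + Γ t 3 0 * k2_0_3 + Γ t 0 1 * k2_1_0 + Γ t 1 1 * k2_1_1 + Γ t 2 1 * k2_1_2 + Γ t 3 1 * k2_1_3 + Γ t 0 2 * k2_2_0 + Γ t 1 2 * k2_2_1 + Γ t 2 2 * k2_2_2 + Γ t 3 2 * k2_2_3 + Γ t 0 3 * k2_3_0 + Γ t 1 3 * k2_3_1 + Γ t 2 3 * k2_3_2 + Γ t 3 3 * k2_3_3 + Γ t 0 0 * k1_0_0 + Γ t 1 0 * k1_0_1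 + Γ t 2 0 * k1_0_2 + Γ t 3 0 * k1_0_3 + Γ t 0 1 * k1_1_0 + Γ t 1 1 * k1_1_1 + Γ t 2 1 * k1_1_2 + Γ t 3 1 * k1_1_3 + Γ t 0 2 * k1_2_0 + Γ t 1 2 * k1_2_1 + Γ t 2 2 * k1_2_2 + Γ t 3 2 * k1_2_3 + Γ t 0 3 * k1_3_0 + Γ t 1 3 * k1_3_1 + Γ t 2 3 * k1_3_2 + Γ t 3 3 * k1_3_3
  have L2C : (((h t 0 0 : ℝ) : ℂ) * ((deriv (fun x => g x 0 0) t : ℝ) : ℂ) + ((h t 0 1 : ℝ) : ℂ) * ((deriv (fun x => g x 1 0) t : ℝ) : ℂ) + ((h t 0 2 : ℝ) : ℂ) * ((deriv (fun x => g x 2 0) t : ℝ) : ℂ) + ((h t 0 3 : ℝ) : ℂ) * ((deriv (fun x => g x 3 0) t : ℝ) : ℂ) + ((h t 1 0 : ℝ) : ℂ) * ((deriv (fun x => g x 0 1) t : ℝ) : ℂ) + ((h t 1 1 : ℝ) : ℂ) * ((deriv (fun x => g x 1 1) t : ℝ) : ℂ) + ((h t 1 2 : ℝ) : ℂ) * ((deriv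 (fun x => g x 2 1) t : ℝ) : ℂ) + ((h t 1 3 : ℝ) : ℂ) * ((deriv (fun x => g x 3 1) t : ℝ) : ℂ) + ((h t 2 0 : ℝ) : ℂ) * ((deriv (fun x => g x 0 2) t : ℝ) : ℂ) + ((h t 2 1 : ℝ) : ℂ) * ((deriv (fun x => g x 1 2) t : ℝ) : ℂ) + ((h t 2 2 : ℝ) : ℂ) * ((deriv (fun x => g x 2 2) t : ℝ) : ℂ) + ((h t 2 3 : ℝ) : ℂ) * ((deriv (fun x => g x 3 2) t : ℝ) : ℂ) + ((h t 3 0 : ℝ) : ℂ) * ((deriv (fun x => g x 0 3) t : ℝ) : ℂ) + ((h t 3 1 : ℝ) : ℂ) * ((deriv (fun x => g x 1 3) t : ℝ) : ℂ) + ((h t 3 2 : ℝ) : ℂ) * ((deriv (fun x => g x 2 3) t : ℝ) : ℂ) + ((h t 3 3 : ℝ) : ℂ) * ((deriv (fun x => g x 3 3) t : ℝ) : ℂ))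
      = 2 * (((Γ t 0 0 : ℝ) : ℂ) + ((Γ t 1 1 : ℝ) : ℂ) + ((Γ t 2 2 : ℝ) : ℂ) + ((Γ t 3 3 : ℝ) : ℂ)) := by
    exact_mod_cast congrArg Complex.ofReal L2
  have eSB0_0_0 := hSBs t 0 0 0
  simp only [Fin.sum_univ_four] at eSB0_0_0
  have eT0_0_0 := hSB2s t 0 0 0
  simp only [Fin.sum_univ_four] at eT0_0_0
  have eSB0_0_1 := hSBs t 0 0 1
  simp only [Fin.sum_univ_four] at eSB0_0_1
  have eT0_0_1 := hSB2s t 0 0 1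
  simp only [Fin.sum_univ_four] at eT0_0_1
  have eSB0_1_0 := hSBs t 0 1 0
  simp only [Fin.sum_univ_four] at eSB0_1_0
  have eT0_1_0 := hSB2s t 0 1 0
  simp only [Fin.sum_univ_four] at eT0_1_0
  have eSB0_1_1 := hSBs t 0 1 1
  simp only [Fin.sum_univ_four] at eSB0_1_1
  have eT0_1_1 := hSB2s t 0 1 1
  simp only [Fin.sum_univ_four] at eT0_1_1
  have eSB1_0_0 := hSBs t 1 0 0
  simp only [Fin.sum_univ_four] at eSB1_0_0
  have eT1_0_0 := hSB2s t 1 0 0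
  simp only [Fin.sum_univ_four] at eT1_0_0
  have eSB1_0_1 := hSBs t 1 0 1
  simp only [Fin.sum_univ_four] at eSB1_0_1
  have eT1_0_1 := hSB2s t 1 0 1
  simp only [Fin.sum_univ_four] at eT1_0_1
  have eSB1_1_0 := hSBs t 1 1 0
  simp only [Fin.sum_univ_four] at eSB1_1_0
  have eT1_1_0 := hSB2s t 1 1 0
  simp only [Fin.sum_univ_four] at eT1_1_0
  have eSB1_1_1 := hSBs t 1 1 1
  simp only [Fin.sum_univ_four] at eSB1_1_1
  have eT1_1_1 := hSB2s t 1 1 1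
  simp only [Fin.sum_univ_four] at eT1_1_1
  have eSB2_0_0 := hSBs t 2 0 0
  simp only [Fin.sum_univ_four] at eSB2_0_0
  have eT2_0_0 := hSB2s t 2 0 0
  simp only [Fin.sum_univ_four] at eT2_0_0
  have eSB2_0_1 := hSBs t 2 0 1
  simp only [Fin.sum_univ_four] at eSB2_0_1
  have eT2_0_1 := hSB2s t 2 0 1
  simp only [Fin.sum_univ_four] at eT2_0_1
  have eSB2_1_0 := hSBs t 2 1 0
  simp only [Fin.sum_univ_four] at eSB2_1_0
  have eT2_1_0 := hSB2s t 2 1 0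
  simp only [Fin.sum_univ_four] at eT2_1_0
  have eSB2_1_1 := hSBs t 2 1 1
  simp only [Fin.sum_univ_four] at eSB2_1_1
  have eT2_1_1 := hSB2s t 2 1 1
  simp only [Fin.sum_univ_four] at eT2_1_1
  have eSB3_0_0 := hSBs t 3 0 0
  simp only [Fin.sum_univ_four] at eSB3_0_0
  have eT3_0_0 := hSB2s t 3 0 0
  simp only [Fin.sum_univ_four] at eT3_0_0
  have eSB3_0_1 := hSBs t 3 0 1
  simp only [Fin.sum_univ_four] at eSB3_0_1
  have eT3_0_1 := hSB2s t 3 0 1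
  simp only [Fin.sum_univ_four] at eT3_0_1
  have eSB3_1_0 := hSBs t 3 1 0
  simp only [Fin.sum_univ_four] at eSB3_1_0
  have eT3_1_0 := hSB2s t 3 1 0
  simp only [Fin.sum_univ_four] at eT3_1_0
  have eSB3_1_1 := hSBs t 3 1 1
  simp only [Fin.sum_univ_four] at eSB3_1_1
  have eT3_1_1 := hSB2s t 3 1 1
  simp only [Fin.sum_univ_four] at eT3_1_1
  have q2_0_0 := hquad2 t 0 0 0 0
  simp only [Fin.sum_univ_four] at q2_0_0
  simp only [if_true, mul_one] at q2_0_0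
  have eC00 : (((h t 0 0 : ℝ) : ℂ) * G t 0 0 0 * G t 0 1 1 + ((h t 0 1 : ℝ) : ℂ) * G t 1 0 0 * G t 0 1 1 + ((h t 0 2 : ℝ) : ℂ) * G t 2 0 0 * G t 0 1 1 + ((h t 0 3 : ℝ) : ℂ) * G t 3 0 0 * G t 0 1 1 + ((h t 1 0 : ℝ) : ℂ) * G t 0 0 0 * G t 1 1 1 + ((h t 1 1 : ℝ) : ℂ) * G t 1 0 0 * G t 1 1 1 + ((h t 1 2 : ℝ) : ℂ) * G t 2 0 0 * G t 1 1 1 + ((h t 1 3 : ℝ) : ℂ) * G t 3 0 0 * G t 1 1 1 + ((h t 2 0 : ℝ) : ℂ) * G t 0 0 0 * G t 2 1 1 + ((h t 2 1 : ℝ) : ℂ) * G t 1 0 0 * G t 2 1 1 + ((h t 2 2 : ℝ) : ℂ) * G t 2 0 0 * G t 2 1 1 + ((h t 2 3 : ℝ) : ℂ) * G t 3 0 0 * G t 2 1 1 + ((h t 3 0 : ℝ) : ℂ) * G t 0 0 0 * G t 3 1 1 + ((h t 3 1 : ℝ) : ℂ) * G t 1 0 0 * G t 3 1 1 + ((h t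 3 2 : ℝ) : ℂ) * G t 2 0 0 * G t 3 1 1 + ((h t 3 3 : ℝ) : ℂ) * G t 3 0 0 * G t 3 1 1) * (d t 0 1 * star (d t 0 1)) = (2 : ℂ) := by
    linear_combination (1) * q2_0_0 + (-(1) * G t 0 0 0) * eSB0_0_0 + (-(1) * G t 1 0 0) * eSB1_0_0 + (-(1) * G t 2 0 0) * eSB2_0_0 + (-(1) * G t 3 0 0) * eSB3_0_0 + (-(1) * (((h t 0 0 : ℝ) : ℂ) * G t 0 0 0 + ((h t 0 1 : ℝ) : ℂ) * G t 1 0 0 + ((h t 0 2 : ℝ) : ℂ) * G t 2 0 0 + ((h t 0 3 : ℝ) : ℂ) * G t 3 0 0)) * hBval00 0 + (-(1) * (((h t 1 0 : ℝ) : ℂ) * G t 0 0 0 + ((h t 1 1 : ℝ) : ℂ) * G t 1 0 0 + ((h t 1 2 : ℝ) : ℂ) * G t 2 0 0 + ((h t 1 3 : ℝ) : ℂ) * G t 3 0 0)) * hBval00 1 + (-(1) * (((h t 2 0 : ℝ) : ℂ) * G t 0 0 0 + ((h t 2 1 : ℝ) : ℂ) * G t 1 0 0 + ((h t 2 2 :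 ℝ) : ℂ) * G t 2 0 0 + ((h t 2 3 : ℝ) : ℂ) * G t 3 0 0)) * hBval00 2 + (-(1) * (((h t 3 0 : ℝ) : ℂ) * G t 0 0 0 + ((h t 3 1 : ℝ) : ℂ) * G t 1 0 0 + ((h t 3 2 : ℝ) : ℂ) * G t 2 0 0 + ((h t 3 3 : ℝ) : ℂ) * G t 3 0 0)) * hBval00 3
  have q2_0_1 := hquad2 t 0 1 0 1
  simp only [Fin.sum_univ_four] at q2_0_1
  simp only [if_true, mul_one] at q2_0_1
  have eC01 : (((h t 0 0 : ℝ) : ℂ) * G t 0 0 1 * G t 0 1 0 + ((h t 0 1 : ℝ) : ℂ) * G t 1 0 1 * G t 0 1 0 + ((h t 0 2 : ℝ) : ℂ) * G t 2 0 1 * G t 0 1 0 + ((h t 0 3 : ℝ) : ℂ) * G t 3 0 1 * G t 0 1 0 + ((h t 1 0 : ℝ) : ℂ) * G t 0 0 1 * G t 1 1 0 + ((h t 1 1 : ℝ) : ℂ) * G t 1 0 1 * G t 1 1 0 + ((h t 1 2 : ℝ) : ℂ) * G t 2 0 1 * G t 1 1 0 + ((h t 1 3 : ℝ) : ℂ)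 * G t 3 0 1 * G t 1 1 0 + ((h t 2 0 : ℝ) : ℂ) * G t 0 0 1 * G t 2 1 0 + ((h t 2 1 : ℝ) : ℂ) * G t 1 0 1 * G t 2 1 0 + ((h t 2 2 : ℝ) : ℂ) * G t 2 0 1 * G t 2 1 0 + ((h t 2 3 : ℝ) : ℂ) * G t 3 0 1 * G t 2 1 0 + ((h t 3 0 : ℝ) : ℂ) * G t 0 0 1 * G t 3 1 0 + ((h t 3 1 : ℝ) : ℂ) * G t 1 0 1 * G t 3 1 0 + ((h t 3 2 : ℝ) : ℂ) * G t 2 0 1 * G t 3 1 0 + ((h t 3 3 : ℝ) : ℂ) * G t 3 0 1 * G t 3 1 0) * (d t 0 1 * star (d t 0 1)) = (-2 : ℂ) := by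
    linear_combination (-1) * q2_0_1 + (-(-1) * G t 0 0 1) * eSB0_0_1 + (-(-1) * G t 1 0 1) * eSB1_0_1 + (-(-1) * G t 2 0 1) * eSB2_0_1 + (-(-1) * G t 3 0 1) * eSB3_0_1 + (-(-1) * (((h t 0 0 : ℝ) : ℂ) * G t 0 0 1 + ((h t 0 1 : ℝ) : ℂ) * G t 1 0 1 + ((h t 0 2 : ℝ) : ℂ) * G t 2 0 1 + ((h t 0 3 : ℝ) : ℂ) * G t 3 0 1)) * hBval01 0 + (-(-1) * (((h t 1 0 : ℝ) : ℂ) * G t 0 0 1 + ((h t 1 1 : ℝ) : ℂ) * G t 1 0 1 + ((h t 1 2 : ℝ) : ℂ) * G t 2 0 1 + ((h t 1 3 : ℝ) : ℂ) * G t 3 0 1)) * hBval01 1 + (-(-1) * (((h t 2 0 : ℝ) : ℂ) * G t 0 0 1 + ((h t 2 1 : ℝ) : ℂ) * G t 1 0 1 + ((h t 2 2 : ℝ) : ℂ) * G t 2 0 1 + ((h t 2 3 : ℝ) : ℂ) * G t 3 0 1)) * hBval01 2 + (-(-1) * (((h t 3 0 : ℝ) : ℂ) * G t 0 0 1 + ((h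 t 3 1 : ℝ) : ℂ) * G t 1 0 1 + ((h t 3 2 : ℝ) : ℂ) * G t 2 0 1 + ((h t 3 3 : ℝ) : ℂ) * G t 3 0 1)) * hBval01 3
  have q2_1_0 := hquad2 t 1 0 1 0
  simp only [Fin.sum_univ_four] at q2_1_0
  simp only [if_true, mul_one] at q2_1_0
  have eC10 : (((h t 0 0 : ℝ) : ℂ) * G t 0 1 0 * G t 0 0 1 + ((h t 0 1 : ℝ) : ℂ) * G t 1 1 0 * G t 0 0 1 + ((h t 0 2 : ℝ) : ℂ) * G t 2 1 0 * G t 0 0 1 + ((h t 0 3 : ℝ) : ℂ) * G t 3 1 0 * G t 0 0 1 + ((h t 1 0 : ℝ) : ℂ) * G t 0 1 0 * G t 1 0 1 + ((h t 1 1 : ℝ) : ℂ) * G t 1 1 0 * G t 1 0 1 + ((h t 1 2 : ℝ) : ℂ) * G t 2 1 0 * G t 1 0 1 + ((h t 1 3 : ℝ) : ℂ) * G t 3 1 0 * G t 1 0 1 + ((h t 2 0 : ℝ) : ℂ) * G t 0 1 0 * G t 2 0 1 + ((h t 2 1 : ℝ) : ℂ) * G t 1 1 0 * G t 2 0 1 +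 ((h t 2 2 : ℝ) : ℂ) * G t 2 1 0 * G t 2 0 1 + ((h t 2 3 : ℝ) : ℂ) * G t 3 1 0 * G t 2 0 1 + ((h t 3 0 : ℝ) : ℂ) * G t 0 1 0 * G t 3 0 1 + ((h t 3 1 : ℝ) : ℂ) * G t 1 1 0 * G t 3 0 1 + ((h t 3 2 : ℝ) : ℂ) * G t 2 1 0 * G t 3 0 1 + ((h t 3 3 : ℝ) : ℂ) * G t 3 1 0 * G t 3 0 1) * (d t 0 1 * star (d t 0 1)) = (-2 : ℂ) := by
    linear_combination (-1) * q2_1_0 + (-(-1) * G t 0 1 0) * eSB0_1_0 + (-(-1) * G t 1 1 0) * eSB1_1_0 + (-(-1) * G t 2 1 0) * eSB2_1_0 + (-(-1) * G t 3 1 0) * eSB3_1_0 + (-(-1) * (((h t 0 0 : ℝ) : ℂ) * G t 0 1 0 + ((h t 0 1 : ℝ) : ℂ) * G t 1 1 0 + ((h t 0 2 : ℝ) : ℂ) * G t 2 1 0 + ((h t 0 3 : ℝ) : ℂ) * G t 3 1 0)) * hBval10 0 + (-(-1) * (((h t 1 0 : ℝ) : ℂ) * G t 0 1 0 + ((h t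 1 1 : ℝ) : ℂ) * G t 1 1 0 + ((h t 1 2 : ℝ) : ℂ) * G t 2 1 0 + ((h t 1 3 : ℝ) : ℂ) * G t 3 1 0)) * hBval10 1 + (-(-1) * (((h t 2 0 : ℝ) : ℂ) * G t 0 1 0 + ((h t 2 1 : ℝ) : ℂ) * G t 1 1 0 + ((h t 2 2 : ℝ) : ℂ) * G t 2 1 0 + ((h t 2 3 : ℝ) : ℂ) * G t 3 1 0)) * hBval10 2 + (-(-1) * (((h t 3 0 : ℝ) : ℂ) * G t 0 1 0 + ((h t 3 1 : ℝ) : ℂ) * G t 1 1 0 + ((h t 3 2 : ℝ) : ℂ) * G t 2 1 0 + ((h t 3 3 : ℝ) : ℂ) * G t 3 1 0)) * hBval10 3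
  have q2_1_1 := hquad2 t 1 1 1 1
  simp only [Fin.sum_univ_four] at q2_1_1
  simp only [if_true, mul_one] at q2_1_1
  have eC11 : (((h t 0 0 : ℝ) : ℂ) * G t 0 1 1 * G t 0 0 0 + ((h t 0 1 : ℝ) : ℂ) * G t 1 1 1 * G t 0 0 0 + ((h t 0 2 : ℝ) : ℂ) * G t 2 1 1 * G t 0 0 0 + ((h t 0 3 : ℝ) : ℂ) * G t 3 1 1 * G t 0 0 0 + ((h t 1 0 : ℝ) : ℂ) * G t 0 1 1 * G t 1 0 0 + ((h t 1 1 : ℝ) : ℂ) * G t 1 1 1 * G t 1 0 0 + ((h t 1 2 : ℝ) : ℂ) * G t 2 1 1 * G t 1 0 0 + ((h t 1 3 : ℝ) : ℂ) * G t 3 1 1 * G t 1 0 0 + ((h t 2 0 : ℝ) : ℂ) * G t 0 1 1 * G t 2 0 0 + ((h t 2 1 : ℝ) : ℂ) * G t 1 1 1 * G t 2 0 0 + ((h t 2 2 : ℝ) : ℂ) * G t 2 1 1 * G t 2 0 0 + ((h t 2 3 : ℝ) : ℂ) * G t 3 1 1 * G t 2 0 0 + ((h t 3 0 : ℝ) :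 ℂ) * G t 0 1 1 * G t 3 0 0 + ((h t 3 1 : ℝ) : ℂ) * G t 1 1 1 * G t 3 0 0 + ((h t 3 2 : ℝ) : ℂ) * G t 2 1 1 * G t 3 0 0 + ((h t 3 3 : ℝ) : ℂ) * G t 3 1 1 * G t 3 0 0) * (d t 0 1 * star (d t 0 1)) = (2 : ℂ) := by
    linear_combination (1) * q2_1_1 + (-(1) * G t 0 1 1) * eSB0_1_1 + (-(1) * G t 1 1 1) * eSB1_1_1 + (-(1) * G t 2 1 1) * eSB2_1_1 + (-(1) * G t 3 1 1) * eSB3_1_1 + (-(1) * (((h t 0 0 : ℝ) : ℂ) * G t 0 1 1 + ((h t 0 1 : ℝ) : ℂ) * G t 1 1 1 + ((h t 0 2 : ℝ) : ℂ) * G t 2 1 1 + ((h t 0 3 : ℝ) : ℂ) * G t 3 1 1)) * hBval11 0 + (-(1) * (((h t 1 0 : ℝ) : ℂ) * G t 0 1 1 + ((h t 1 1 : ℝ) : ℂ) * G t 1 1 1 + ((h t 1 2 : ℝ) : ℂ) * G t 2 1 1 + ((h t 1 3 : ℝ) : ℂ) * G t 3 1 1)) * hBval11 1 + (-(1) * (((h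 t 2 0 : ℝ) : ℂ) * G t 0 1 1 + ((h t 2 1 : ℝ) : ℂ) * G t 1 1 1 + ((h t 2 2 : ℝ) : ℂ) * G t 2 1 1 + ((h t 2 3 : ℝ) : ℂ) * G t 3 1 1)) * hBval11 2 + (-(1) * (((h t 3 0 : ℝ) : ℂ) * G t 0 1 1 + ((h t 3 1 : ℝ) : ℂ) * G t 1 1 1 + ((h t 3 2 : ℝ) : ℂ) * G t 2 1 1 + ((h t 3 3 : ℝ) : ℂ) * G t 3 1 1)) * hBval11 3
  have F2 : (deriv (fun x => star (d x 0 0)) t * star (e t 0 0)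
      + deriv (fun x => star (d x 1 0)) t * star (e t 0 1)
      + (deriv (fun x => star (d x 0 1)) t * star (e t 1 0)
      + deriv (fun x => star (d x 1 1)) t * star (e t 1 1))) * star (d t 0 1)
      = 2 * star (deriv (fun x => d x 0 1) t) := by
    simp only [hds00, hds11, hds01, hds10]
    linear_combination (star (deriv (fun x => d x 0 1) t)) * hse10 - (star (deriv (fun x => d x 0 1) t)) * hse01
  have F3 : 2 * (deriv (fun x => G x 0 0 0) t * S t 0 0 0 + deriv (fun x => G x 0 0 1) t * S t 0 0 1 + deriv (fun x => G x 0 1 0) t * S t 0 1 0 + deriv (fun x => G x 0 1 1) t * S t 0 1 1 + deriv (fun x => G x 1 0 0) t * S t 1 0 0 + deriv (fun x => G x 1 0 1) t * S t 1 0 1 + deriv (fun x => G x 1 1 0) t * S t 1 1 0 + deriv (fun x => G x 1 1 1) t * S t 1 1 1 + deriv (fun x => G x 2 0 0) t * S t 2 0 0 + deriv (fun x => G x 2 0 1) t * S t 2 0 1 + deriv (fun x => G x 2 1 0) t * S t 2 1 0 + deriv (fun x => G x 2 1 1) t * S t 2 1 1 + deriv (fun x => G x 3 0 0) t * S t 3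 0 0 + deriv (fun x => G x 3 0 1) t * S t 3 0 1 + deriv (fun x => G x 3 1 0) t * S t 3 1 0 + deriv (fun x => G x 3 1 1) t * S t 3 1 1) * (d t 0 1 * star (d t 0 1))
      = 4 * (((Γ t 0 0 : ℝ) : ℂ) + ((Γ t 1 1 : ℝ) : ℂ) + ((Γ t 2 2 : ℝ) : ℂ) + ((Γ t 3 3 : ℝ) : ℂ)) * (d t 0 1 * star (d t 0 1))
        - 8 * (deriv (fun x => d x 0 1) t) * star (d t 0 1) - 8 * d t 0 1 * star (deriv (fun x => d x 0 1) t) := by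
    linear_combination ((d t 0 1 * star (d t 0 1)) * ((h t 0 0 : ℝ) : ℂ)) * EQ 0 0 + ((d t 0 1 * star (d t 0 1)) * ((h t 0 1 : ℝ) : ℂ)) * EQ 1 0 + ((d t 0 1 * star (d t 0 1)) * ((h t 0 2 : ℝ) : ℂ)) * EQ 2 0 + ((d t 0 1 * star (d t 0 1)) * ((h t 0 3 : ℝ) : ℂ)) * EQ 3 0 + ((d t 0 1 * star (d t 0 1)) * ((h t 1 0 : ℝ) : ℂ)) * EQ 0 1 + ((d t 0 1 * star (d t 0 1)) * ((h t 1 1 : ℝ) : ℂ)) * EQ 1 1 + ((d t 0 1 * star (d t 0 1)) * ((h t 1 2 : ℝ) : ℂ)) * EQ 2 1 + ((d t 0 1 * star (d t 0 1)) * ((h t 1 3 : ℝ) : ℂ)) * EQ 3 1 + ((d t 0 1 * star (d t 0 1)) * ((h t 2 0 : ℝ) : ℂ)) * EQ 0 2 + ((d t 0 1 * star (d t 0 1)) * ((h t 2 1 : ℝ) : ℂ)) * EQ 1 2 + ((d t 0 1 * star (d t 0 1)) * ((h t 2 2 : ℝ) : ℂ)) * EQ 2 2 + ((d t 0 1 *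 star (d t 0 1)) * ((h t 2 3 : ℝ) : ℂ)) * EQ 3 2 + ((d t 0 1 * star (d t 0 1)) * ((h t 3 0 : ℝ) : ℂ)) * EQ 0 3 + ((d t 0 1 * star (d t 0 1)) * ((h t 3 1 : ℝ) : ℂ)) * EQ 1 3 + ((d t 0 1 * star (d t 0 1)) * ((h t 3 2 : ℝ) : ℂ)) * EQ 2 3 + ((d t 0 1 * star (d t 0 1)) * ((h t 3 3 : ℝ) : ℂ)) * EQ 3 3 + ((d t 0 1 * star (d t 0 1)) * (deriv (fun x => G x 0 0 0) t)) * eSB0_0_0 + ((d t 0 1 * star (d t 0 1)) * (deriv (fun x => G x 0 0 1) t)) * eSB0_0_1 + ((d t 0 1 * star (d t 0 1)) * (deriv (fun x => G x 0 1 0) t)) * eSB0_1_0 + ((d t 0 1 * star (d t 0 1)) * (deriv (fun x => G x 0 1 1) t)) * eSB0_1_1 + ((d t 0 1 * star (d t 0 1)) * (deriv (fun x => G x 1 0 0) t)) * eSB1_0_0 + ((d t 0 1 * star (d t 0 1)) * (deriv (fun x => G x 1 0 1) t)) * eSB1_0_1 + ((d t 0 1 * star (d t 0 1)) * (deriv (fun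 x => G x 1 1 0) t)) * eSB1_1_0 + ((d t 0 1 * star (d t 0 1)) * (deriv (fun x => G x 1 1 1) t)) * eSB1_1_1 + ((d t 0 1 * star (d t 0 1)) * (deriv (fun x => G x 2 0 0) t)) * eSB2_0_0 + ((d t 0 1 * star (d t 0 1)) * (deriv (fun x => G x 2 0 1) t)) * eSB2_0_1 + ((d t 0 1 * star (d t 0 1)) * (deriv (fun x => G x 2 1 0) t)) * eSB2_1_0 + ((d t 0 1 * star (d t 0 1)) * (deriv (fun x => G x 2 1 1) t)) * eSB2_1_1 + ((d t 0 1 * star (d t 0 1)) * (deriv (fun x => G x 3 0 0) t)) * eSB3_0_0 + ((d t 0 1 * star (d t 0 1)) * (deriv (fun x => G x 3 0 1) t)) * eSB3_0_1 + ((d t 0 1 * star (d t 0 1)) * (deriv (fun x => G x 3 1 0) t)) * eSB3_1_0 + ((d t 0 1 * star (d t 0 1)) * (deriv (fun x => G x 3 1 1) t)) * eSB3_1_1 + ((d t 0 1 * star (d t 0 1)) * (deriv (fun x => G x 0 0 0) t)) * eT0_0_0 + ((d t 0 1 * star (d t 0 1)) * (deriv (fun x => G x 0 0 1) t)) * eT0_0_1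 + ((d t 0 1 * star (d t 0 1)) * (deriv (fun x => G x 0 1 0) t)) * eT0_1_0 + ((d t 0 1 * star (d t 0 1)) * (deriv (fun x => G x 0 1 1) t)) * eT0_1_1 + ((d t 0 1 * star (d t 0 1)) * (deriv (fun x => G x 1 0 0) t)) * eT1_0_0 + ((d t 0 1 * star (d t 0 1)) * (deriv (fun x => G x 1 0 1) t)) * eT1_0_1 + ((d t 0 1 * star (d t 0 1)) * (deriv (fun x => G x 1 1 0) t)) * eT1_1_0 + ((d t 0 1 * star (d t 0 1)) * (deriv (fun x => G x 1 1 1) t)) * eT1_1_1 + ((d t 0 1 * star (d t 0 1)) * (deriv (fun x => G x 2 0 0) t)) * eT2_0_0 + ((d t 0 1 * star (d t 0 1)) * (deriv (fun x => G x 2 0 1) t)) * eT2_0_1 + ((d t 0 1 * star (d t 0 1)) * (deriv (fun x => G x 2 1 0) t)) * eT2_1_0 + ((d t 0 1 * star (d t 0 1)) * (deriv (fun x => G x 2 1 1) t)) * eT2_1_1 + ((d t 0 1 * star (d t 0 1)) * (deriv (fun x => G x 3 0 0) t)) * eT3_0_0 + ((d t 0 1 * star (d t 0 1)) * (deriv (fun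 x => G x 3 0 1) t)) * eT3_0_1 + ((d t 0 1 * star (d t 0 1)) * (deriv (fun x => G x 3 1 0) t)) * eT3_1_0 + ((d t 0 1 * star (d t 0 1)) * (deriv (fun x => G x 3 1 1) t)) * eT3_1_1 + ((d t 0 1 * star (d t 0 1)) * (((h t 0 0 : ℝ) : ℂ) * (deriv (fun x => G x 0 0 0) t) + ((h t 1 0 : ℝ) : ℂ) * (deriv (fun x => G x 1 0 0) t) + ((h t 2 0 : ℝ) : ℂ) * (deriv (fun x => G x 2 0 0) t) + ((h t 3 0 : ℝ) : ℂ) * (deriv (fun x => G x 3 0 0) t))) * hBval00 0 + ((d t 0 1 * star (d t 0 1)) * (((h t 0 0 : ℝ) : ℂ) * (deriv (fun x => G x 0 0 1) t) + ((h t 1 0 : ℝ) : ℂ) * (deriv (fun x => G x 1 0 1) t) + ((h t 2 0 : ℝ) : ℂ) * (deriv (fun x => G x 2 0 1) t) + ((h t 3 0 : ℝ) : ℂ) * (deriv (fun x => G x 3 0 1) t))) * hBval01 0 + ((d t 0 1 * star (d t 0 1)) * (((h t 0 0 : ℝ) : ℂ) * (deriv (fun x => G x 0 1 0) t) + ((h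 t 1 0 : ℝ) : ℂ) * (deriv (fun x => G x 1 1 0) t) + ((h t 2 0 : ℝ) : ℂ) * (deriv (fun x => G x 2 1 0) t) + ((h t 3 0 : ℝ) : ℂ) * (deriv (fun x => G x 3 1 0) t))) * hBval10 0 + ((d t 0 1 * star (d t 0 1)) * (((h t 0 0 : ℝ) : ℂ) * (deriv (fun x => G x 0 1 1) t) + ((h t 1 0 : ℝ) : ℂ) * (deriv (fun x => G x 1 1 1) t) + ((h t 2 0 : ℝ) : ℂ) * (deriv (fun x => G x 2 1 1) t) + ((h t 3 0 : ℝ) : ℂ) * (deriv (fun x => G x 3 1 1) t))) * hBval11 0 + ((d t 0 1 * star (d t 0 1)) * (((h t 0 1 : ℝ) : ℂ) * (deriv (fun x => G x 0 0 0) t) + ((h t 1 1 : ℝ) : ℂ) * (deriv (fun x => G x 1 0 0) t) + ((h t 2 1 : ℝ) : ℂ) * (deriv (fun x => G x 2 0 0) t) + ((h t 3 1 : ℝ) : ℂ) * (deriv (fun x => G x 3 0 0) t))) * hBval00 1 + ((d t 0 1 * star (d t 0 1)) * (((h t 0 1 : ℝ) : ℂ) * (deriv (fun x => G x 0 0 1)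 t) + ((h t 1 1 : ℝ) : ℂ) * (deriv (fun x => G x 1 0 1) t) + ((h t 2 1 : ℝ) : ℂ) * (deriv (fun x => G x 2 0 1) t) + ((h t 3 1 : ℝ) : ℂ) * (deriv (fun x => G x 3 0 1) t))) * hBval01 1 + ((d t 0 1 * star (d t 0 1)) * (((h t 0 1 : ℝ) : ℂ) * (deriv (fun x => G x 0 1 0) t) + ((h t 1 1 : ℝ) : ℂ) * (deriv (fun x => G x 1 1 0) t) + ((h t 2 1 : ℝ) : ℂ) * (deriv (fun x => G x 2 1 0) t) + ((h t 3 1 : ℝ) : ℂ) * (deriv (fun x => G x 3 1 0) t))) * hBval10 1 + ((d t 0 1 * star (d t 0 1)) * (((h t 0 1 : ℝ) : ℂ) * (deriv (fun x => G x 0 1 1) t) + ((h t 1 1 : ℝ) : ℂ) * (deriv (fun x => G x 1 1 1) t) + ((h t 2 1 : ℝ) : ℂ) * (deriv (fun x => G x 2 1 1) t) + ((h t 3 1 : ℝ) : ℂ) * (deriv (fun x => G x 3 1 1) t))) * hBval11 1 + ((d t 0 1 * star (d t 0 1)) * (((h t 0 2 : ℝ) : ℂ) * (deriv (fun x => G x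 0 0 0) t) + ((h t 1 2 : ℝ) : ℂ) * (deriv (fun x => G x 1 0 0) t) + ((h t 2 2 : ℝ) : ℂ) * (deriv (fun x => G x 2 0 0) t) + ((h t 3 2 : ℝ) : ℂ) * (deriv (fun x => G x 3 0 0) t))) * hBval00 2 + ((d t 0 1 * star (d t 0 1)) * (((h t 0 2 : ℝ) : ℂ) * (deriv (fun x => G x 0 0 1) t) + ((h t 1 2 : ℝ) : ℂ) * (deriv (fun x => G x 1 0 1) t) + ((h t 2 2 : ℝ) : ℂ) * (deriv (fun x => G x 2 0 1) t) + ((h t 3 2 : ℝ) : ℂ) * (deriv (fun x => G x 3 0 1) t))) * hBval01 2 + ((d t 0 1 * star (d t 0 1)) * (((h t 0 2 : ℝ) : ℂ) * (deriv (fun x => G x 0 1 0) t) + ((h t 1 2 : ℝ) : ℂ) * (deriv (fun x => G x 1 1 0) t) + ((h t 2 2 : ℝ) : ℂ) * (deriv (fun x => G x 2 1 0) t) + ((h t 3 2 : ℝ) : ℂ) * (deriv (fun x => G x 3 1 0) t))) * hBval10 2 + ((d t 0 1 * star (d t 0 1)) * (((h t 0 2 : ℝ) : ℂ) * (deriv (fun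 x => G x 0 1 1) t) + ((h t 1 2 : ℝ) : ℂ) * (deriv (fun x => G x 1 1 1) t) + ((h t 2 2 : ℝ) : ℂ) * (deriv (fun x => G x 2 1 1) t) + ((h t 3 2 : ℝ) : ℂ) * (deriv (fun x => G x 3 1 1) t))) * hBval11 2 + ((d t 0 1 * star (d t 0 1)) * (((h t 0 3 : ℝ) : ℂ) * (deriv (fun x => G x 0 0 0) t) + ((h t 1 3 : ℝ) : ℂ) * (deriv (fun x => G x 1 0 0) t) + ((h t 2 3 : ℝ) : ℂ) * (deriv (fun x => G x 2 0 0) t) + ((h t 3 3 : ℝ) : ℂ) * (deriv (fun x => G x 3 0 0) t))) * hBval00 3 + ((d t 0 1 * star (d t 0 1)) * (((h t 0 3 : ℝ) : ℂ) * (deriv (fun x => G x 0 0 1) t) + ((h t 1 3 : ℝ) : ℂ) * (deriv (fun x => G x 1 0 1) t) + ((h t 2 3 : ℝ) : ℂ) * (deriv (fun x => G x 2 0 1) t) + ((h t 3 3 : ℝ) : ℂ) * (deriv (fun x => G x 3 0 1) t))) * hBval01 3 + ((d t 0 1 * star (d t 0 1)) * (((h t 0 3 : ℝ) : ℂ) *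 (deriv (fun x => G x 0 1 0) t) + ((h t 1 3 : ℝ) : ℂ) * (deriv (fun x => G x 1 1 0) t) + ((h t 2 3 : ℝ) : ℂ) * (deriv (fun x => G x 2 1 0) t) + ((h t 3 3 : ℝ) : ℂ) * (deriv (fun x => G x 3 1 0) t))) * hBval10 3 + ((d t 0 1 * star (d t 0 1)) * (((h t 0 3 : ℝ) : ℂ) * (deriv (fun x => G x 0 1 1) t) + ((h t 1 3 : ℝ) : ℂ) * (deriv (fun x => G x 1 1 1) t) + ((h t 2 3 : ℝ) : ℂ) * (deriv (fun x => G x 2 1 1) t) + ((h t 3 3 : ℝ) : ℂ) * (deriv (fun x => G x 3 1 1) t))) * hBval11 3 + (-(1) * ((deriv (fun x => d x 0 1) t) * star (d t 0 1) + d t 0 1 * star (deriv (fun x => d x 0 1) t))) * eC00 + (-(-1) * ((deriv (fun x => d x 0 1) t) * star (d t 0 1) + d t 0 1 * star (deriv (fun x => d x 0 1) t))) * eC01 + (-(-1) * ((deriv (fun x => d x 0 1) t) * star (d t 0 1) + d t 0 1 * star (deriv (fun x => d x 0 1) t))) * eC10 + (-(1) * ((deriv (fun x => d x 0 1) t) *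 star (d t 0 1) + d t 0 1 * star (deriv (fun x => d x 0 1) t))) * eC11 + (2 * (d t 0 1 * star (d t 0 1))) * L2C
  have hA00 := hA t 0 0
  have hA11 := hA t 1 1
  simp only [Fin.sum_univ_two, Fin.sum_univ_four] at hA00 hA11
  simp only [if_true, mul_one] at hA00 hA11
  have key' : deriv (fun x => d x 0 1) t * star (d t 0 1)
      = (A t 0 0 + A t 1 1) * d t 0 1 * star (d t 0 1) := by
    linear_combination (-(d t 0 1 * star (d t 0 1))) * hA00 + (-(d t 0 1 * star (d t 0 1))) * hA11 + (-(d t 0 1 * star (d t 0 1))/4) * L1 + (1/8) * F3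
      + (d t 0 1/2) * F2
  have key : deriv (fun x => d x 0 1) t = (A t 0 0 + A t 1 1) * d t 0 1 :=
    mul_right_cancel₀ hbne (by linear_combination key')
  -- final case analysis
  have goal00 : deriv (fun x => d x 0 0) t
      - (∑ k : Fin 2, A t k 0 * d t k 0) - (∑ k : Fin 2, A t k 0 * d t 0 k) = 0 := by
    simp only [Fin.sum_univ_two, hder00, hd00 t, hd11 t, hd10 t]
    ring
  have goal01 : deriv (fun x => d x 0 1) t
      - (∑ k : Fin 2, A t k 0 * d t k 1) - (∑ k : Fin 2, A t k 1 * d t 0 k) = 0 := by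
    simp only [Fin.sum_univ_two, hd00 t, hd11 t, hd10 t]
    linear_combination key
  have goal10 : deriv (fun x => d x 1 0) t
      - (∑ k : Fin 2, A t k 1 * d t k 0) - (∑ k : Fin 2, A t k 0 * d t 1 k) = 0 := by
    simp only [Fin.sum_univ_two, hder10, hd00 t, hd11 t, hd10 t]
    linear_combination - key
  have goal11 : deriv (fun x => d x 1 1) t
      - (∑ k : Fin 2, A t k 1 * d t k 1) - (∑ k : Fin 2, A t k 1 * d t 1 k) = 0 := by
    simp only [Fin.sum_univ_two, hder11, hd00 t, hd11 t, hd10 t]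
    ring
  fin_cases i <;> fin_cases j <;>
    first
    | exact goal00
    | exact goal01
    | exact goal10
    | exact goal11
end

section
/- The spinor connection coefficients A and conjugate coefficients B defined by the explicit formulas satisfy the Infeld–van der Waerden concordance condition (∇G = 0 in the given frame direction): for all p ∈ {0,1,2,3}, all i, ī ∈ {1,2} and all t ∈ ℝ, ((G_p)_{i,ī})' + Σ_{k=1}^{2} A^i_k (G_p)_{k,ī} + Σ_{k̄=1}^{2} B^ī_{k̄} (G_p)_{i,k̄} − Σ_{k=0}^{3} Γ^k_p (G_k)_{i,ī} = 0. -/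
open Finset

open Matrix


namespace IvdWAux

variable {gc hc : Fin 4 → Fin 4 → ℂ} {Gm Ss : Fin 4 → Fin 2 → Fin 2 → ℂ}
  {dd ee : Fin 2 → Fin 2 → ℂ}


noncomputable def slowd (Gm : Fin 4 → Fin 2 → Fin 2 → ℂ) (dd : Fin 2 → Fin 2 → ℂ)
    (a : Fin 4) (s sb : Fin 2) : ℂ :=
  ∑ r : Fin 2, ∑ rb : Fin 2, Gm a r rb * dd r s * star (dd rb sb)


lemma ed_one (hde : ∀ j i, ∑ r : Fin 2, dd j r * ee r i = if j = i then (1:ℂ) else 0) :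
    ∀ i k, ∑ r : Fin 2, ee i r * dd r k = if i = k then (1:ℂ) else 0 := by
  have h1 : (Matrix.of dd) * (Matrix.of ee) = 1 := by
    ext j i; simp [Matrix.mul_apply, Matrix.one_apply, hde]
  have h2 := mul_eq_one_comm.mp h1
  intro i k
  have := congrFun (congrFun h2 i) k
  simpa [Matrix.mul_apply, Matrix.one_apply] using this

lemma slowS
    (HS : ∀ q s sb, Ss q s sb
      = ∑ r : Fin 2, ∑ rb : Fin 2, ∑ p : Fin 4,
          Gm p r rb * hc p q * dd r s * star (dd rb sb)) :
    ∀ q s sb, Ss q s sb = ∑ p : Fin 4, hc p q * slowd Gm dd p s sb := by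
  intro q s sb
  rw [HS]
  simp only [slowd, Fin.sum_univ_two, Fin.sum_univ_four]
  ring

lemma lowerS
    (Hgh : ∀ p q, ∑ r : Fin 4, gc p r * hc r q = if p = q then (1:ℂ) else 0)
    (HS : ∀ q s sb, Ss q s sb
      = ∑ r : Fin 2, ∑ rb : Fin 2, ∑ p : Fin 4,
          Gm p r rb * hc p q * dd r s * star (dd rb sb)) :
    ∀ a s sb, ∑ q : Fin 4, gc q a * Ss q s sb = slowd Gm dd a s sb := by
  intro a s sb
  have h1 : (Matrix.of gc) * (Matrix.of hc) = 1 := by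
    ext j i; simp [Matrix.mul_apply, Matrix.one_apply, Hgh]
  have h2 := mul_eq_one_comm.mp h1
  have hg1 : ∀ p a, ∑ q : Fin 4, hc p q * gc q a = if p = a then (1:ℂ) else 0 := by
    intro p a
    have := congrFun (congrFun h2 p) a
    simpa [Matrix.mul_apply, Matrix.one_apply] using this
  have step : ∑ q : Fin 4, gc q a * Ss q s sb
      = ∑ p : Fin 4, (∑ q : Fin 4, hc p q * gc q a) * slowd Gm dd p s sb := by
    simp only [slowS HS]
    simp only [Fin.sum_univ_four]
    ring
  rw [step]
  simp only [hg1, ite_mul, one_mul, zero_mul]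
  simp [Finset.sum_ite_eq']

lemma quad1low
    (Hgh : ∀ p q, ∑ r : Fin 4, gc p r * hc r q = if p = q then (1:ℂ) else 0)
    (HS : ∀ q s sb, Ss q s sb
      = ∑ r : Fin 2, ∑ rb : Fin 2, ∑ p : Fin 4,
          Gm p r rb * hc p q * dd r s * star (dd rb sb))
    (Hq1 : ∀ p q, ∑ r : Fin 2, ∑ rb : Fin 2, Gm p r rb * Ss q r rb
      = 2 * (if p = q then (1:ℂ) else 0)) :
    ∀ p a, ∑ s : Fin 2, ∑ sb : Fin 2, Gm p s sb * slowd Gm dd a s sb = 2 * gc p a := by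
  intro p a
  have hl := lowerS Hgh HS
  have step : ∑ s : Fin 2, ∑ sb : Fin 2, Gm p s sb * slowd Gm dd a s sb
      = ∑ q : Fin 4, gc q a * (∑ s : Fin 2, ∑ sb : Fin 2, Gm p s sb * Ss q s sb) := by
    simp only [← hl]
    simp only [Fin.sum_univ_two, Fin.sum_univ_four]
    ring
  rw [step]
  simp only [Hq1, mul_ite, mul_one, mul_zero]
  simp [Finset.sum_ite_eq]
  ring

lemma Elow
    (hd_skew : ∀ i j, dd i j = - dd j i)
    (hde : ∀ j i, ∑ r : Fin 2, dd j r * ee r i = if j = i then (1:ℂ) else 0) :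
    ∀ a i ib, ∑ k : Fin 2, ∑ sb : Fin 2,
      ee i k * star (ee ib sb) * slowd Gm dd a k sb = Gm a i ib := by
  intro a i ib
  have hed := ed_one hde
  have c1 : ∀ x r, (∑ k : Fin 2, ee x k * dd r k) = -(if x = r then (1:ℂ) else 0) := by
    intro x r
    have : ∀ k, ee x k * dd r k = -(ee x k * dd k r) := by
      intro k; rw [hd_skew r k]; ring
    rw [Finset.sum_congr rfl (fun k _ => this k)]
    rw [show (∑ k : Fin 2, -(ee x k * dd k r)) = -(∑ k : Fin 2, ee x k * dd k r) by simp]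
    rw [hed]
  have c2 : ∀ rb, (∑ sb : Fin 2, star (ee ib sb) * star (dd rb sb))
      = -(if ib = rb then (1:ℂ) else 0) := by
    intro rb
    have : ∑ sb : Fin 2, star (ee ib sb) * star (dd rb sb)
        = star (∑ sb : Fin 2, ee ib sb * dd rb sb) := by
      simp [star_sum, mul_comm]
    rw [this, c1 ib rb]
    simp
  have step : ∑ k : Fin 2, ∑ sb : Fin 2, ee i k * star (ee ib sb) * slowd Gm dd a k sb
      = ∑ r : Fin 2, ∑ rb : Fin 2, Gm a r rb * ((∑ k : Fin 2, ee i k * dd r k)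
          * (∑ sb : Fin 2, star (ee ib sb) * star (dd rb sb))) := by
    simp only [slowd, Fin.sum_univ_two]
    ring
  rw [step]
  simp only [c1, c2]
  fin_cases i <;> fin_cases ib <;> simp [Fin.sum_univ_two]

lemma relB
    (Hgh : ∀ p q, ∑ r : Fin 4, gc p r * hc r q = if p = q then (1:ℂ) else 0)
    (HS : ∀ q s sb, Ss q s sb
      = ∑ r : Fin 2, ∑ rb : Fin 2, ∑ p : Fin 4,
          Gm p r rb * hc p q * dd r s * star (dd rb sb))
    (Hq1 : ∀ p q, ∑ r : Fin 2, ∑ rb : Fin 2, Gm p r rb * Ss q r rb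
      = 2 * (if p = q then (1:ℂ) else 0))
    (hd_skew : ∀ i j, dd i j = - dd j i)
    (hde : ∀ j i, ∑ r : Fin 2, dd j r * ee r i = if j = i then (1:ℂ) else 0)
    (Hsym : ∀ (p q : Fin 4) (r u rb ub : Fin 2),
      Gm p r ub * Gm q u rb + Gm q r ub * Gm p u rb
        = Gm p r rb * Gm q u ub + Gm q r rb * Gm p u ub
          - 2 * ee r u * star (ee rb ub) * gc p q) :
    ∀ (a m p : Fin 4) (i ib : Fin 2),
      (∑ k : Fin 2, ∑ sb : Fin 2, Gm m i sb * slowd Gm dd a k sb * Gm p k ib)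
      + (∑ k : Fin 2, ∑ sb : Fin 2, Gm p i sb * slowd Gm dd a k sb * Gm m k ib)
      = 2 * gc p a * Gm m i ib + 2 * gc m a * Gm p i ib - 2 * gc m p * Gm a i ib := by
  intro a m p i ib
  have hq := quad1low Hgh HS Hq1
  have hE := Elow (Gm := Gm) hd_skew hde
  have step : (∑ k : Fin 2, ∑ sb : Fin 2, Gm m i sb * slowd Gm dd a k sb * Gm p k ib)
      + (∑ k : Fin 2, ∑ sb : Fin 2, Gm p i sb * slowd Gm dd a k sb * Gm m k ib)
      = Gm m i ib * (∑ k : Fin 2, ∑ sb : Fin 2, Gm p k sb * slowd Gm dd a k sb)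
        + Gm p i ib * (∑ k : Fin 2, ∑ sb : Fin 2, Gm m k sb * slowd Gm dd a k sb)
        - 2 * gc m p * (∑ k : Fin 2, ∑ sb : Fin 2,
            ee i k * star (ee ib sb) * slowd Gm dd a k sb) := by
    simp only [Fin.sum_univ_two]
    linear_combination (slowd Gm dd a 0 0) * Hsym m p i 0 ib 0
      + (slowd Gm dd a 0 1) * Hsym m p i 0 ib 1
      + (slowd Gm dd a 1 0) * Hsym m p i 1 ib 0
      + (slowd Gm dd a 1 1) * Hsym m p i 1 ib 1
  rw [step, hq p a, hq m a, hE a i ib]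
  ring

lemma expandM
    (Hq2 : ∀ (r rb s sb : Fin 2), ∑ q : Fin 4, Gm q r rb * Ss q s sb
      = 2 * (if r = s then (1:ℂ) else 0) * (if rb = sb then (1:ℂ) else 0))
    (M : Fin 2 → Fin 2 → ℂ) :
    ∀ x y, ∑ m : Fin 4, (∑ s : Fin 2, ∑ sb : Fin 2, M s sb * Ss m s sb) * Gm m x y
      = 2 * M x y := by
  intro x y
  have step : ∑ m : Fin 4, (∑ s : Fin 2, ∑ sb : Fin 2, M s sb * Ss m s sb) * Gm m x y
      = ∑ s : Fin 2, ∑ sb : Fin 2, M s sb * (∑ m : Fin 4, Gm m x y * Ss m s sb) := by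
    simp only [Fin.sum_univ_two, Fin.sum_univ_four]
    ring
  rw [step]
  simp only [Hq2]
  fin_cases x <;> fin_cases y <;> simp [Fin.sum_univ_two, mul_comm]


lemma d_diag0 (d : ℝ → Fin 2 → Fin 2 → ℂ) (hd_skew : ∀ t i j, d t i j = - d t j i) :
    ∀ s, ∀ x, d x s s = 0 := by
  intro s x
  have := hd_skew x s s
  linear_combination (1/2 : ℂ) * this

lemma de_fact (d e : ℝ → Fin 2 → Fin 2 → ℂ) (hd_skew : ∀ t i j, d t i j = - d t j i)
    (hde : ∀ t j i, ∑ r : Fin 2, d t j r * e t r i = if j = i then (1 : ℂ) else 0) (t : ℝ) :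
    d t 0 1 * e t 1 0 = 1 := by
  have h := hde t 0 0
  rw [Fin.sum_univ_two] at h
  rw [d_diag0 d hd_skew 0 t] at h
  simp at h
  linear_combination h

lemma deriv_d_struct (d e : ℝ → Fin 2 → Fin 2 → ℂ)
    (hd_skew : ∀ t i j, d t i j = - d t j i)
    (hde : ∀ t j i, ∑ r : Fin 2, d t j r * e t r i = if j = i then (1 : ℂ) else 0) (t : ℝ) :
    ∀ r s, deriv (fun x => d x r s) t
      = (deriv (fun x => d x 0 1) t * e t 1 0) * d t r s := by
  have hdiag : ∀ s : Fin 2, deriv (fun x => d x s s) t = 0 := by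
    intro s
    have h : (fun x => d x s s) = fun _ => (0:ℂ) := funext (fun x => d_diag0 d hd_skew s x)
    rw [h, deriv_const]
  have h10 : deriv (fun x => d x 1 0) t = - deriv (fun x => d x 0 1) t := by
    have h : (fun x => d x 1 0) = fun x => -(d x 0 1) := funext (fun x => hd_skew x 1 0)
    rw [h, deriv.fun_neg]
  have hfact := de_fact d e hd_skew hde t
  intro r s
  fin_cases r <;> fin_cases s <;> simp only [Fin.mk_zero, Fin.mk_one, Fin.isValue]
  · rw [hdiag 0, d_diag0 d hd_skew 0 t]; ring
  · linear_combination (- deriv (fun x => d x 0 1) t) * hfact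
  · rw [h10, hd_skew t 1 0]
    linear_combination (deriv (fun x => d x 0 1) t) * hfact
  · rw [hdiag 1, d_diag0 d hd_skew 1 t]; ring

lemma tau_eq (d e : ℝ → Fin 2 → Fin 2 → ℂ)
    (hd_skew : ∀ t i j, d t i j = - d t j i)
    (hde : ∀ t j i, ∑ r : Fin 2, d t j r * e t r i = if j = i then (1 : ℂ) else 0) (t : ℝ) :
    (∑ s : Fin 2, ∑ u : Fin 2, deriv (fun x => d x s u) t * e t u s)
      = 2 * (deriv (fun x => d x 0 1) t * e t 1 0) := by
  have hst := deriv_d_struct d e hd_skew hde t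
  have h00 := hde t 0 0
  have h11 := hde t 1 1
  have c00 : d t 0 0 = 0 := d_diag0 d hd_skew 0 t
  have c11 : d t 1 1 = 0 := d_diag0 d hd_skew 1 t
  rw [Fin.sum_univ_two] at h00 h11
  rw [c00] at h00
  rw [c11] at h11
  rw [if_pos rfl] at h00
  rw [if_pos rfl] at h11
  simp only [Fin.sum_univ_two]
  linear_combination e t 0 0 * hst 0 0 + e t 1 0 * hst 0 1 + e t 0 1 * hst 1 0
    + e t 1 1 * hst 1 1
    + (deriv (fun x => d x 0 1) t * e t 1 0) * h00
    + (deriv (fun x => d x 0 1) t * e t 1 0) * h11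
    + (deriv (fun x => d x 0 1) t * e t 1 0 * e t 0 0) * c00
    + (deriv (fun x => d x 0 1) t * e t 1 0 * e t 1 1) * c11

lemma deriv_star_d (d : ℝ → Fin 2 → Fin 2 → ℂ)
    (hd_diff : ∀ i j, Differentiable ℝ (fun t => d t i j)) (t : ℝ) : ∀ r s,
    deriv (fun x => star (d x r s)) t = star (deriv (fun x => d x r s) t) :=
  fun r s => (((hd_diff r s) t).hasDerivAt.star).deriv

section derivkey

lemma coeGh (g h : ℝ → Fin 4 → Fin 4 → ℝ)
    (hgh : ∀ t p q, ∑ r : Fin 4, g t p r * h t r q = if p = q then (1 : ℝ) else 0) (x : ℝ) :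
    ∀ p q', ∑ r : Fin 4, ((g x p r : ℝ) : ℂ) * ((h x r q' : ℝ) : ℂ)
      = if p = q' then (1:ℂ) else 0 := by
  intro p q'
  have h1 : ((∑ r : Fin 4, g x p r * h x r q' : ℝ) : ℂ)
      = ((if p = q' then (1:ℝ) else 0 : ℝ) : ℂ) := by rw [hgh x p q']
  push_cast at h1
  rw [h1]
  split_ifs <;> simp

/-- pointwise value of the big quadruple sum -/
lemma Fval (g h : ℝ → Fin 4 → Fin 4 → ℝ)
    (hgh : ∀ t p q, ∑ r : Fin 4, g t p r * h t r q = if p = q then (1 : ℝ) else 0)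
    (d : ℝ → Fin 2 → Fin 2 → ℂ)
    (G : ℝ → Fin 4 → Fin 2 → Fin 2 → ℂ)
    (S : ℝ → Fin 4 → Fin 2 → Fin 2 → ℂ)
    (hS : ∀ t q s sb, S t q s sb
      = ∑ r : Fin 2, ∑ rb : Fin 2, ∑ p : Fin 4,
          G t p r rb * (h t p q : ℂ) * d t r s * star (d t rb sb))
    (hquad1 : ∀ t p q, ∑ r : Fin 2, ∑ rb : Fin 2, G t p r rb * S t q r rb
      = 2 * (if p = q then (1 : ℂ) else 0))
    (q a : Fin 4) (x : ℝ) :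
    (∑ s : Fin 2, ∑ sb : Fin 2, ∑ r : Fin 2, ∑ rb : Fin 2,
        G x q s sb * G x a r rb * d x r s * star (d x rb sb))
      = 2 * ((g x q a : ℝ) : ℂ) := by
  have hq := quad1low (gc := fun p q' => ((g x p q' : ℝ) : ℂ))
    (hc := fun p q' => ((h x p q' : ℝ) : ℂ)) (Gm := G x) (Ss := S x) (dd := d x)
    (coeGh g h hgh x) (hS x) (hquad1 x) q a
  rw [← hq]
  simp only [slowd, Fin.sum_univ_two]
  ring

/-- the key symmetrized derivative identity -/
lemma Asym (g h : ℝ → Fin 4 → Fin 4 → ℝ)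
    (hg_diff : ∀ i j, Differentiable ℝ (fun t => g t i j))
    (hgh : ∀ t p q, ∑ r : Fin 4, g t p r * h t r q = if p = q then (1 : ℝ) else 0)
    (d e : ℝ → Fin 2 → Fin 2 → ℂ)
    (hd_diff : ∀ i j, Differentiable ℝ (fun t => d t i j))
    (hd_skew : ∀ t i j, d t i j = - d t j i)
    (hde : ∀ t j i, ∑ r : Fin 2, d t j r * e t r i = if j = i then (1 : ℂ) else 0)
    (G : ℝ → Fin 4 → Fin 2 → Fin 2 → ℂ)
    (hG_diff : ∀ p i j, Differentiable ℝ (fun t => G t p i j))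
    (S : ℝ → Fin 4 → Fin 2 → Fin 2 → ℂ)
    (hS : ∀ t q s sb, S t q s sb
      = ∑ r : Fin 2, ∑ rb : Fin 2, ∑ p : Fin 4,
          G t p r rb * (h t p q : ℂ) * d t r s * star (d t rb sb))
    (hquad1 : ∀ t p q, ∑ r : Fin 2, ∑ rb : Fin 2, G t p r rb * S t q r rb
      = 2 * (if p = q then (1 : ℂ) else 0))
    (t : ℝ) (q a : Fin 4) :
    (∑ s : Fin 2, ∑ sb : Fin 2, deriv (fun x => G x q s sb) t * slowd (G t) (d t) a s sb)
    + (∑ s : Fin 2, ∑ sb : Fin 2, deriv (fun x => G x a s sb) t * slowd (G t) (d t) q s sb)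
    = 2 * ((deriv (fun x => g x q a) t : ℝ) : ℂ)
      - 2 * ((deriv (fun x => d x 0 1) t * e t 1 0)
          + star (deriv (fun x => d x 0 1) t * e t 1 0)) * ((g t q a : ℝ) : ℂ) := by
  have hFval := Fval g h hgh d G S hS hquad1 q a
  -- derivative of the quadruple sum via product rule
  have hDer : HasDerivAt (fun x => ∑ s : Fin 2, ∑ sb : Fin 2, ∑ r : Fin 2, ∑ rb : Fin 2,
      G x q s sb * G x a r rb * d x r s * star (d x rb sb))
      (∑ s : Fin 2, ∑ sb : Fin 2, ∑ r : Fin 2, ∑ rb : Fin 2,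
        (((deriv (fun x => G x q s sb) t * G t a r rb
            + G t q s sb * deriv (fun x => G x a r rb) t) * d t r s
            + G t q s sb * G t a r rb * deriv (fun x => d x r s) t) * star (d t rb sb)
          + G t q s sb * G t a r rb * d t r s * star (deriv (fun x => d x rb sb) t))) t := by
    refine HasDerivAt.fun_sum fun s _ => ?_
    refine HasDerivAt.fun_sum fun sb _ => ?_
    refine HasDerivAt.fun_sum fun r _ => ?_
    refine HasDerivAt.fun_sum fun rb _ => ?_
    exact ((((hG_diff q s sb t).hasDerivAt.mul (hG_diff a r rb t).hasDerivAt).mul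
      (hd_diff r s t).hasDerivAt).mul ((hd_diff rb sb t).hasDerivAt.star))
  have hDer2 : HasDerivAt (fun x => ∑ s : Fin 2, ∑ sb : Fin 2, ∑ r : Fin 2, ∑ rb : Fin 2,
      G x q s sb * G x a r rb * d x r s * star (d x rb sb))
      (2 * ((deriv (fun x => g x q a) t : ℝ) : ℂ)) t := by
    have hg' : HasDerivAt (fun x => 2 * ((g x q a : ℝ) : ℂ))
        (2 * ((deriv (fun x => g x q a) t : ℝ) : ℂ)) t :=
      ((hg_diff q a t).hasDerivAt.ofReal_comp).const_mul 2
    exact hg'.congr_of_eventuallyEq (Filter.Eventually.of_forall (fun x => hFval x))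
  have hV := hDer.unique hDer2
  -- split the derivative-value sum into four pieces
  have hsplit : (∑ s : Fin 2, ∑ sb : Fin 2, ∑ r : Fin 2, ∑ rb : Fin 2,
        (((deriv (fun x => G x q s sb) t * G t a r rb
            + G t q s sb * deriv (fun x => G x a r rb) t) * d t r s
            + G t q s sb * G t a r rb * deriv (fun x => d x r s) t) * star (d t rb sb)
          + G t q s sb * G t a r rb * d t r s * star (deriv (fun x => d x rb sb) t)))
      = (∑ s : Fin 2, ∑ sb : Fin 2, ∑ r : Fin 2, ∑ rb : Fin 2,
          deriv (fun x => G x q s sb) t * G t a r rb * d t r s * star (d t rb sb))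
        + (∑ s : Fin 2, ∑ sb : Fin 2, ∑ r : Fin 2, ∑ rb : Fin 2,
          G t q s sb * deriv (fun x => G x a r rb) t * d t r s * star (d t rb sb))
        + (∑ s : Fin 2, ∑ sb : Fin 2, ∑ r : Fin 2, ∑ rb : Fin 2,
          G t q s sb * G t a r rb * deriv (fun x => d x r s) t * star (d t rb sb))
        + (∑ s : Fin 2, ∑ sb : Fin 2, ∑ r : Fin 2, ∑ rb : Fin 2,
          G t q s sb * G t a r rb * d t r s * star (deriv (fun x => d x rb sb) t)) := by
    simp only [Fin.sum_univ_two]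
    ring
  have hT1 : (∑ s : Fin 2, ∑ sb : Fin 2, ∑ r : Fin 2, ∑ rb : Fin 2,
        deriv (fun x => G x q s sb) t * G t a r rb * d t r s * star (d t rb sb))
      = ∑ s : Fin 2, ∑ sb : Fin 2, deriv (fun x => G x q s sb) t * slowd (G t) (d t) a s sb := by
    simp only [slowd, Fin.sum_univ_two]
    ring
  have z10 : d t 1 0 = - d t 0 1 := hd_skew t 1 0
  have z00 : d t 0 0 = 0 := d_diag0 d hd_skew 0 t
  have z11 : d t 1 1 = 0 := d_diag0 d hd_skew 1 t
  have hT2 : (∑ s : Fin 2, ∑ sb : Fin 2, ∑ r : Fin 2, ∑ rb : Fin 2,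
        G t q s sb * deriv (fun x => G x a r rb) t * d t r s * star (d t rb sb))
      = ∑ s : Fin 2, ∑ sb : Fin 2, deriv (fun x => G x a s sb) t * slowd (G t) (d t) q s sb := by
    simp only [slowd, Fin.sum_univ_two, z00, z11, z10, star_neg, star_zero,
      mul_zero, zero_mul, mul_neg, neg_mul]
    ring
  have hdstr := deriv_d_struct d e hd_skew hde t
  have hT3 : (∑ s : Fin 2, ∑ sb : Fin 2, ∑ r : Fin 2, ∑ rb : Fin 2,
        G t q s sb * G t a r rb * deriv (fun x => d x r s) t * star (d t rb sb))
      = (deriv (fun x => d x 0 1) t * e t 1 0) * (2 * ((g t q a : ℝ) : ℂ)) := by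
    rw [← hFval t]
    simp only [Fin.sum_univ_two]
    linear_combination (G t q 0 0 * G t a 0 0 * star (d t 0 0) + G t q 0 0 * G t a 0 1 * star (d t 1 0) + G t q 0 1 * G t a 0 0 * star (d t 0 1) + G t q 0 1 * G t a 0 1 * star (d t 1 1)) * hdstr 0 0
      + (G t q 1 0 * G t a 0 0 * star (d t 0 0) + G t q 1 0 * G t a 0 1 * star (d t 1 0) + G t q 1 1 * G t a 0 0 * star (d t 0 1) + G t q 1 1 * G t a 0 1 * star (d t 1 1)) * hdstr 0 1
      + (G t q 0 0 * G t a 1 0 * star (d t 0 0) + G t q 0 0 * G t a 1 1 * star (d t 1 0) + G t q 0 1 * G t a 1 0 * star (d t 0 1) + G t q 0 1 * G t a 1 1 * star (d t 1 1)) * hdstr 1 0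
      + (G t q 1 0 * G t a 1 0 * star (d t 0 0) + G t q 1 0 * G t a 1 1 * star (d t 1 0) + G t q 1 1 * G t a 1 0 * star (d t 0 1) + G t q 1 1 * G t a 1 1 * star (d t 1 1)) * hdstr 1 1
  have hstar := deriv_star_d d hd_diff t
  have hT4 : (∑ s : Fin 2, ∑ sb : Fin 2, ∑ r : Fin 2, ∑ rb : Fin 2,
        G t q s sb * G t a r rb * d t r s * star (deriv (fun x => d x rb sb) t))
      = star (deriv (fun x => d x 0 1) t * e t 1 0) * (2 * ((g t q a : ℝ) : ℂ)) := by
    have hdstrS : ∀ r s : Fin 2, star (deriv (fun x => d x r s) t)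
        = star (deriv (fun x => d x 0 1) t * e t 1 0) * star (d t r s) := by
      intro r s
      rw [hdstr r s, star_mul']
    rw [← hFval t]
    simp only [Fin.sum_univ_two, hstar]
    linear_combination (G t q 0 0 * G t a 0 0 * d t 0 0 + G t q 0 0 * G t a 1 0 * d t 1 0 + G t q 1 0 * G t a 0 0 * d t 0 1 + G t q 1 0 * G t a 1 0 * d t 1 1) * hdstrS 0 0
      + (G t q 0 1 * G t a 0 0 * d t 0 0 + G t q 0 1 * G t a 1 0 * d t 1 0 + G t q 1 1 * G t a 0 0 * d t 0 1 + G t q 1 1 * G t a 1 0 * d t 1 1) * hdstrS 0 1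
      + (G t q 0 0 * G t a 0 1 * d t 0 0 + G t q 0 0 * G t a 1 1 * d t 1 0 + G t q 1 0 * G t a 0 1 * d t 0 1 + G t q 1 0 * G t a 1 1 * d t 1 1) * hdstrS 1 0
      + (G t q 0 1 * G t a 0 1 * d t 0 0 + G t q 0 1 * G t a 1 1 * d t 1 0 + G t q 1 1 * G t a 0 1 * d t 0 1 + G t q 1 1 * G t a 1 1 * d t 1 1) * hdstrS 1 1
  rw [← hT1, ← hT2]
  rw [hsplit, hT3, hT4] at hV
  linear_combination hV

noncomputable def Dop (G : ℝ → Fin 4 → Fin 2 → Fin 2 → ℂ) (Γ : ℝ → Fin 4 → Fin 4 → ℝ)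
    (t : ℝ) (q : Fin 4) (s sb : Fin 2) : ℂ :=
  deriv (fun x => G x q s sb) t - ∑ a : Fin 4, ((Γ t a q : ℝ) : ℂ) * G t a s sb

noncomputable def cc (G : ℝ → Fin 4 → Fin 2 → Fin 2 → ℂ) (S : ℝ → Fin 4 → Fin 2 → Fin 2 → ℂ)
    (Γ : ℝ → Fin 4 → Fin 4 → ℝ) (t : ℝ) (q m : Fin 4) : ℂ :=
  (1/2 : ℂ) * ∑ s : Fin 2, ∑ sb : Fin 2, Dop G Γ t q s sb * S t m s sb

lemma coeHg (g h : ℝ → Fin 4 → Fin 4 → ℝ)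
    (hgh : ∀ t p q, ∑ r : Fin 4, g t p r * h t r q = if p = q then (1 : ℝ) else 0) (x : ℝ) :
    ∀ p q', ∑ r : Fin 4, ((h x p r : ℝ) : ℂ) * ((g x r q' : ℝ) : ℂ)
      = if p = q' then (1:ℂ) else 0 := by
  have h1 : (Matrix.of (g x)) * (Matrix.of (h x)) = 1 := by
    ext j i; simp [Matrix.mul_apply, Matrix.one_apply, hgh]
  have h2 := mul_eq_one_comm.mp h1
  intro p q'
  have h3 : ∑ r : Fin 4, h x p r * g x r q' = if p = q' then (1:ℝ) else 0 := by
    have := congrFun (congrFun h2 p) q'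
    simpa [Matrix.mul_apply, Matrix.one_apply] using this
  have h4 : ((∑ r : Fin 4, h x p r * g x r q' : ℝ) : ℂ)
      = ((if p = q' then (1:ℝ) else 0 : ℝ) : ℂ) := by rw [h3]
  push_cast at h4
  rw [h4]
  split_ifs <;> simp

lemma Dexp (G : ℝ → Fin 4 → Fin 2 → Fin 2 → ℂ) (S : ℝ → Fin 4 → Fin 2 → Fin 2 → ℂ)
    (Γ : ℝ → Fin 4 → Fin 4 → ℝ)
    (hquad2 : ∀ t (r rb s sb : Fin 2), ∑ q : Fin 4, G t q r rb * S t q s sb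
      = 2 * (if r = s then (1 : ℂ) else 0) * (if rb = sb then (1 : ℂ) else 0))
    (t : ℝ) : ∀ q x y, Dop G Γ t q x y = ∑ m : Fin 4, cc G S Γ t q m * G t m x y := by
  intro q x y
  have he := expandM (Gm := G t) (Ss := S t) (hquad2 t) (fun s sb => Dop G Γ t q s sb) x y
  have step : ∑ m : Fin 4, cc G S Γ t q m * G t m x y
      = (1/2 : ℂ) * ∑ m : Fin 4,
          (∑ s : Fin 2, ∑ sb : Fin 2, Dop G Γ t q s sb * S t m s sb) * G t m x y := by
    simp only [cc, Fin.sum_univ_four]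
    ring
  rw [step, he]
  ring

lemma ccsym (g h : ℝ → Fin 4 → Fin 4 → ℝ)
    (hg_symm : ∀ t i j, g t i j = g t j i)
    (hg_diff : ∀ i j, Differentiable ℝ (fun t => g t i j))
    (hgh : ∀ t p q, ∑ r : Fin 4, g t p r * h t r q = if p = q then (1 : ℝ) else 0)
    (d e : ℝ → Fin 2 → Fin 2 → ℂ)
    (hd_diff : ∀ i j, Differentiable ℝ (fun t => d t i j))
    (hd_skew : ∀ t i j, d t i j = - d t j i)
    (hde : ∀ t j i, ∑ r : Fin 2, d t j r * e t r i = if j = i then (1 : ℂ) else 0)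
    (G : ℝ → Fin 4 → Fin 2 → Fin 2 → ℂ)
    (hG_diff : ∀ p i j, Differentiable ℝ (fun t => G t p i j))
    (S : ℝ → Fin 4 → Fin 2 → Fin 2 → ℂ)
    (hS : ∀ t q s sb, S t q s sb
      = ∑ r : Fin 2, ∑ rb : Fin 2, ∑ p : Fin 4,
          G t p r rb * (h t p q : ℂ) * d t r s * star (d t rb sb))
    (hquad1 : ∀ t p q, ∑ r : Fin 2, ∑ rb : Fin 2, G t p r rb * S t q r rb
      = 2 * (if p = q then (1 : ℂ) else 0))
    (Γ : ℝ → Fin 4 → Fin 4 → ℝ)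
    (hΓ_compat : ∀ t p q,
      (∑ a : Fin 4, g t p a * Γ t a q) + (∑ a : Fin 4, g t q a * Γ t a p)
        = deriv (fun x => g x p q) t)
    (t : ℝ) : ∀ q a : Fin 4,
    (∑ m : Fin 4, cc G S Γ t q m * ((g t m a : ℝ) : ℂ))
    + (∑ m : Fin 4, cc G S Γ t a m * ((g t m q : ℝ) : ℂ))
    = -((deriv (fun x => d x 0 1) t * e t 1 0)
        + star (deriv (fun x => d x 0 1) t * e t 1 0)) * ((g t q a : ℝ) : ℂ) := by
  intro q a
  have hl := lowerS (gc := fun p q' => ((g t p q' : ℝ) : ℂ))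
    (hc := fun p q' => ((h t p q' : ℝ) : ℂ)) (Gm := G t) (Ss := S t) (dd := d t)
    (coeGh g h hgh t) (hS t)
  have hq1l := quad1low (gc := fun p q' => ((g t p q' : ℝ) : ℂ))
    (hc := fun p q' => ((h t p q' : ℝ) : ℂ)) (Gm := G t) (Ss := S t) (dd := d t)
    (coeGh g h hgh t) (hS t) (hquad1 t)
  have step1 : ∀ b a' : Fin 4, ∑ m : Fin 4, cc G S Γ t b m * ((g t m a' : ℝ) : ℂ)
      = (1/2 : ℂ) * ∑ s : Fin 2, ∑ sb : Fin 2,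
          Dop G Γ t b s sb * slowd (G t) (d t) a' s sb := by
    intro b a'
    have e1 : ∑ m : Fin 4, cc G S Γ t b m * ((g t m a' : ℝ) : ℂ)
        = (1/2 : ℂ) * ∑ s : Fin 2, ∑ sb : Fin 2,
            Dop G Γ t b s sb * (∑ m : Fin 4, ((g t m a' : ℝ) : ℂ) * S t m s sb) := by
      simp only [cc, Fin.sum_univ_two, Fin.sum_univ_four]
      ring
    rw [e1]
    simp only [hl]
  have step2 : ∀ b a' : Fin 4,
      (∑ s : Fin 2, ∑ sb : Fin 2, Dop G Γ t b s sb * slowd (G t) (d t) a' s sb)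
      = (∑ s : Fin 2, ∑ sb : Fin 2,
          deriv (fun x => G x b s sb) t * slowd (G t) (d t) a' s sb)
        - ∑ p : Fin 4, ((Γ t p b : ℝ) : ℂ) * (2 * ((g t p a' : ℝ) : ℂ)) := by
    intro b a'
    have e2 : (∑ s : Fin 2, ∑ sb : Fin 2, Dop G Γ t b s sb * slowd (G t) (d t) a' s sb)
        = (∑ s : Fin 2, ∑ sb : Fin 2,
            deriv (fun x => G x b s sb) t * slowd (G t) (d t) a' s sb)
          - ∑ p : Fin 4, ((Γ t p b : ℝ) : ℂ)
              * (∑ s : Fin 2, ∑ sb : Fin 2, G t p s sb * slowd (G t) (d t) a' s sb) := by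
      simp only [Dop, Fin.sum_univ_two, Fin.sum_univ_four]
      ring
    rw [e2]
    simp only [hq1l]
  have hAs := Asym g h hg_diff hgh d e hd_diff hd_skew hde G hG_diff S hS hquad1 t q a
  -- coerced metric compatibility
  have hr := hΓ_compat t a q
  have hfn : (fun x => g x a q) = (fun x => g x q a) := funext (fun x => hg_symm x a q)
  rw [hfn] at hr
  have hrC := congrArg (fun r : ℝ => (r : ℂ)) hr
  push_cast at hrC
  have hgsC : ∀ m : Fin 4, ((g t m a : ℝ) : ℂ) = ((g t a m : ℝ) : ℂ) := by
    intro m; rw [hg_symm t m a]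
  have hgsC2 : ∀ m : Fin 4, ((g t m q : ℝ) : ℂ) = ((g t q m : ℝ) : ℂ) := by
    intro m; rw [hg_symm t m q]
  rw [step1 q a, step1 a q, step2 q a, step2 a q]
  simp only [Fin.sum_univ_four] at hrC ⊢
  linear_combination (1/2 : ℂ) * hAs - hrC
    - (((Γ t 0 q : ℝ) : ℂ)) * hgsC 0 - (((Γ t 1 q : ℝ) : ℂ)) * hgsC 1
    - (((Γ t 2 q : ℝ) : ℂ)) * hgsC 2 - (((Γ t 3 q : ℝ) : ℂ)) * hgsC 3
    - (((Γ t 0 a : ℝ) : ℂ)) * hgsC2 0 - (((Γ t 1 a : ℝ) : ℂ)) * hgsC2 1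
    - (((Γ t 2 a : ℝ) : ℂ)) * hgsC2 2 - (((Γ t 3 a : ℝ) : ℂ)) * hgsC2 3

lemma cctrace (g h : ℝ → Fin 4 → Fin 4 → ℝ)
    (hg_symm : ∀ t i j, g t i j = g t j i)
    (hg_diff : ∀ i j, Differentiable ℝ (fun t => g t i j))
    (hgh : ∀ t p q, ∑ r : Fin 4, g t p r * h t r q = if p = q then (1 : ℝ) else 0)
    (d e : ℝ → Fin 2 → Fin 2 → ℂ)
    (hd_diff : ∀ i j, Differentiable ℝ (fun t => d t i j))
    (hd_skew : ∀ t i j, d t i j = - d t j i)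
    (hde : ∀ t j i, ∑ r : Fin 2, d t j r * e t r i = if j = i then (1 : ℂ) else 0)
    (G : ℝ → Fin 4 → Fin 2 → Fin 2 → ℂ)
    (hG_diff : ∀ p i j, Differentiable ℝ (fun t => G t p i j))
    (S : ℝ → Fin 4 → Fin 2 → Fin 2 → ℂ)
    (hS : ∀ t q s sb, S t q s sb
      = ∑ r : Fin 2, ∑ rb : Fin 2, ∑ p : Fin 4,
          G t p r rb * (h t p q : ℂ) * d t r s * star (d t rb sb))
    (hquad1 : ∀ t p q, ∑ r : Fin 2, ∑ rb : Fin 2, G t p r rb * S t q r rb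
      = 2 * (if p = q then (1 : ℂ) else 0))
    (Γ : ℝ → Fin 4 → Fin 4 → ℝ)
    (hΓ_compat : ∀ t p q,
      (∑ a : Fin 4, g t p a * Γ t a q) + (∑ a : Fin 4, g t q a * Γ t a p)
        = deriv (fun x => g x p q) t)
    (t : ℝ) :
    ∑ q : Fin 4, cc G S Γ t q q
      = -2 * ((deriv (fun x => d x 0 1) t * e t 1 0)
          + star (deriv (fun x => d x 0 1) t * e t 1 0)) := by
  have hstar := ccsym g h hg_symm hg_diff hgh d e hd_diff hd_skew hde G hG_diff S hS
    hquad1 Γ hΓ_compat t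
  have hGH := coeGh g h hgh t
  have hHG := coeHg g h hgh t
  have hgsC : ∀ m q : Fin 4, ((g t m q : ℝ) : ℂ) = ((g t q m : ℝ) : ℂ) := by
    intro m q; rw [hg_symm t m q]
  have key : ∀ q a : Fin 4, ∑ m : Fin 4, cc G S Γ t q m * ((g t m a : ℝ) : ℂ)
      = -((deriv (fun x => d x 0 1) t * e t 1 0)
          + star (deriv (fun x => d x 0 1) t * e t 1 0)) * ((g t q a : ℝ) : ℂ)
        - ∑ m : Fin 4, cc G S Γ t a m * ((g t q m : ℝ) : ℂ) := by
    intro q a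
    have h0 := hstar q a
    simp only [Fin.sum_univ_four] at h0 ⊢
    linear_combination h0 - cc G S Γ t a 0 * hgsC 0 q - cc G S Γ t a 1 * hgsC 1 q
      - cc G S Γ t a 2 * hgsC 2 q - cc G S Γ t a 3 * hgsC 3 q
  have e1 : ∑ q : Fin 4, cc G S Γ t q q
      = ∑ q : Fin 4, ∑ m : Fin 4, cc G S Γ t q m * (if m = q then (1:ℂ) else 0) := by
    simp [mul_ite, Finset.sum_ite_eq']
  have e2 : ∑ q : Fin 4, ∑ m : Fin 4, cc G S Γ t q m * (if m = q then (1:ℂ) else 0)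
      = ∑ a : Fin 4, ∑ q : Fin 4, ((h t a q : ℝ) : ℂ)
          * (∑ m : Fin 4, cc G S Γ t q m * ((g t m a : ℝ) : ℂ)) := by
    simp only [← hGH]
    simp only [Fin.sum_univ_four]
    ring
  have e3 : ∑ a : Fin 4, ∑ q : Fin 4, ((h t a q : ℝ) : ℂ)
        * (∑ m : Fin 4, cc G S Γ t q m * ((g t m a : ℝ) : ℂ))
      = -((deriv (fun x => d x 0 1) t * e t 1 0)
            + star (deriv (fun x => d x 0 1) t * e t 1 0))
          * (∑ a : Fin 4, (∑ q : Fin 4, ((h t a q : ℝ) : ℂ) * ((g t q a : ℝ) : ℂ)))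
        - ∑ a : Fin 4, ∑ m : Fin 4, cc G S Γ t a m
            * (∑ q : Fin 4, ((h t a q : ℝ) : ℂ) * ((g t q m : ℝ) : ℂ)) := by
    simp only [key]
    simp only [Fin.sum_univ_four]
    ring
  have e4 : ∀ a : Fin 4, (∑ q : Fin 4, ((h t a q : ℝ) : ℂ) * ((g t q a : ℝ) : ℂ)) = 1 := by
    intro a; rw [hHG a a]; simp
  have e5 : ∑ a : Fin 4, ∑ m : Fin 4, cc G S Γ t a m
        * (∑ q : Fin 4, ((h t a q : ℝ) : ℂ) * ((g t q m : ℝ) : ℂ))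
      = ∑ q : Fin 4, cc G S Γ t q q := by
    simp only [hHG]
    simp [mul_ite, Finset.sum_ite_eq]
  have efinal := e1.trans (e2.trans e3)
  rw [e5] at efinal
  simp only [e4] at efinal
  simp only [Fin.sum_univ_four] at efinal ⊢
  linear_combination (1/2 : ℂ) * efinal

lemma goalKey (g h : ℝ → Fin 4 → Fin 4 → ℝ)
    (hg_symm : ∀ t i j, g t i j = g t j i)
    (hg_diff : ∀ i j, Differentiable ℝ (fun t => g t i j))
    (hgh : ∀ t p q, ∑ r : Fin 4, g t p r * h t r q = if p = q then (1 : ℝ) else 0)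
    (d e : ℝ → Fin 2 → Fin 2 → ℂ)
    (hd_diff : ∀ i j, Differentiable ℝ (fun t => d t i j))
    (hd_skew : ∀ t i j, d t i j = - d t j i)
    (hde : ∀ t j i, ∑ r : Fin 2, d t j r * e t r i = if j = i then (1 : ℂ) else 0)
    (G : ℝ → Fin 4 → Fin 2 → Fin 2 → ℂ)
    (hG_diff : ∀ p i j, Differentiable ℝ (fun t => G t p i j))
    (S : ℝ → Fin 4 → Fin 2 → Fin 2 → ℂ)
    (hS : ∀ t q s sb, S t q s sb
      = ∑ r : Fin 2, ∑ rb : Fin 2, ∑ p : Fin 4,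
          G t p r rb * (h t p q : ℂ) * d t r s * star (d t rb sb))
    (hquad1 : ∀ t p q, ∑ r : Fin 2, ∑ rb : Fin 2, G t p r rb * S t q r rb
      = 2 * (if p = q then (1 : ℂ) else 0))
    (hquad2 : ∀ t (r rb s sb : Fin 2), ∑ q : Fin 4, G t q r rb * S t q s sb
      = 2 * (if r = s then (1 : ℂ) else 0) * (if rb = sb then (1 : ℂ) else 0))
    (Γ : ℝ → Fin 4 → Fin 4 → ℝ)
    (hΓ_compat : ∀ t p q,
      (∑ a : Fin 4, g t p a * Γ t a q) + (∑ a : Fin 4, g t q a * Γ t a p)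
        = deriv (fun x => g x p q) t)
    (hsym_quad : ∀ t (p q : Fin 4) (r u rb ub : Fin 2),
      G t p r ub * G t q u rb + G t q r ub * G t p u rb
        = G t p r rb * G t q u ub + G t q r rb * G t p u ub
          - 2 * e t r u * star (e t rb ub) * (g t p q : ℂ))
    (t : ℝ) (p : Fin 4) (i ib : Fin 2) :
    (∑ q : Fin 4, ((∑ k : Fin 2, ∑ sb : Fin 2, Dop G Γ t q i sb * S t q k sb * G t p k ib)
      + (∑ s : Fin 2, ∑ kb : Fin 2, Dop G Γ t q s ib * S t q s kb * G t p i kb)))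
    = 4 * Dop G Γ t p i ib
      - 2 * ((deriv (fun x => d x 0 1) t * e t 1 0)
          + star (deriv (fun x => d x 0 1) t * e t 1 0)) * G t p i ib := by
  set K : ℂ := (deriv (fun x => d x 0 1) t * e t 1 0)
      + star (deriv (fun x => d x 0 1) t * e t 1 0) with hKdef
  have hDexp := Dexp G S Γ hquad2 t
  have hslowS := slowS (hc := fun p' q' => ((h t p' q' : ℝ) : ℂ)) (Gm := G t) (Ss := S t)
    (dd := d t) (hS t)
  have hrelB := relB (gc := fun p' q' => ((g t p' q' : ℝ) : ℂ))
    (hc := fun p' q' => ((h t p' q' : ℝ) : ℂ)) (Gm := G t) (Ss := S t) (dd := d t) (ee := e t)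
    (coeGh g h hgh t) (hS t) (hquad1 t) (hd_skew t) (hde t) (hsym_quad t)
  have hGH := coeGh g h hgh t
  have hHG := coeHg g h hgh t
  have hgsC : ∀ m q : Fin 4, ((g t m q : ℝ) : ℂ) = ((g t q m : ℝ) : ℂ) := by
    intro m q; rw [hg_symm t m q]
  have hstar := ccsym g h hg_symm hg_diff hgh d e hd_diff hd_skew hde G hG_diff S hS
    hquad1 Γ hΓ_compat t
  have htr := cctrace g h hg_symm hg_diff hgh d e hd_diff hd_skew hde G hG_diff S hS
    hquad1 Γ hΓ_compat t
  -- stage A : rewrite everything in terms of cc, slowd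
  have stageA : ∀ q : Fin 4,
      ((∑ k : Fin 2, ∑ sb : Fin 2, Dop G Γ t q i sb * S t q k sb * G t p k ib)
        + (∑ s : Fin 2, ∑ kb : Fin 2, Dop G Γ t q s ib * S t q s kb * G t p i kb))
      = ∑ a : Fin 4, ∑ m : Fin 4, ((h t a q : ℝ) : ℂ) * cc G S Γ t q m
          * ((∑ k : Fin 2, ∑ sb : Fin 2,
                G t m i sb * slowd (G t) (d t) a k sb * G t p k ib)
            + (∑ k : Fin 2, ∑ sb : Fin 2,
                G t p i sb * slowd (G t) (d t) a k sb * G t m k ib)) := by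
    intro q
    simp only [hDexp, hslowS]
    simp only [Fin.sum_univ_two, Fin.sum_univ_four]
    ring
  -- stage B : apply relB
  have stageB : ∀ q : Fin 4,
      (∑ a : Fin 4, ∑ m : Fin 4, ((h t a q : ℝ) : ℂ) * cc G S Γ t q m
          * ((∑ k : Fin 2, ∑ sb : Fin 2,
                G t m i sb * slowd (G t) (d t) a k sb * G t p k ib)
            + (∑ k : Fin 2, ∑ sb : Fin 2,
                G t p i sb * slowd (G t) (d t) a k sb * G t m k ib)))
      = ∑ a : Fin 4, ∑ m : Fin 4, ((h t a q : ℝ) : ℂ) * cc G S Γ t q m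
          * (2 * ((g t p a : ℝ) : ℂ) * G t m i ib + 2 * ((g t m a : ℝ) : ℂ) * G t p i ib
            - 2 * ((g t m p : ℝ) : ℂ) * G t a i ib) := by
    intro q
    refine Finset.sum_congr rfl fun a _ => Finset.sum_congr rfl fun m _ => ?_
    rw [hrelB a m p i ib]
  -- T2 evaluation
  have hT2 : (∑ q : Fin 4, ∑ a : Fin 4, ∑ m : Fin 4, ((h t a q : ℝ) : ℂ)
        * cc G S Γ t q m * (2 * ((g t p a : ℝ) : ℂ) * G t m i ib))
      = 2 * Dop G Γ t p i ib := by
    have e1 : (∑ q : Fin 4, ∑ a : Fin 4, ∑ m : Fin 4, ((h t a q : ℝ) : ℂ)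
          * cc G S Γ t q m * (2 * ((g t p a : ℝ) : ℂ) * G t m i ib))
        = ∑ q : Fin 4, (∑ a : Fin 4, ((g t p a : ℝ) : ℂ) * ((h t a q : ℝ) : ℂ))
            * (2 * (∑ m : Fin 4, cc G S Γ t q m * G t m i ib)) := by
      simp only [Fin.sum_univ_four]
      ring
    rw [e1]
    simp only [hGH, ite_mul, one_mul, zero_mul]
    rw [Finset.sum_ite_eq]
    simp [← hDexp]
  -- T1 evaluation
  have hT1 : (∑ q : Fin 4, ∑ a : Fin 4, ∑ m : Fin 4, ((h t a q : ℝ) : ℂ)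
        * cc G S Γ t q m * (2 * ((g t m a : ℝ) : ℂ) * G t p i ib))
      = -4 * K * G t p i ib := by
    have e1 : (∑ q : Fin 4, ∑ a : Fin 4, ∑ m : Fin 4, ((h t a q : ℝ) : ℂ)
          * cc G S Γ t q m * (2 * ((g t m a : ℝ) : ℂ) * G t p i ib))
        = ∑ q : Fin 4, ∑ m : Fin 4, (∑ a : Fin 4, ((g t m a : ℝ) : ℂ) * ((h t a q : ℝ) : ℂ))
            * (cc G S Γ t q m * (2 * G t p i ib)) := by
      simp only [Fin.sum_univ_four]
      ring
    rw [e1]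
    simp only [hGH, ite_mul, one_mul, zero_mul]
    have e2 : ∀ q : Fin 4, (∑ m : Fin 4, if m = q then cc G S Γ t q m * (2 * G t p i ib) else 0)
        = cc G S Γ t q q * (2 * G t p i ib) := by
      intro q
      rw [Finset.sum_ite_eq']
      simp
    simp only [e2]
    have e3 : (∑ q : Fin 4, cc G S Γ t q q * (2 * G t p i ib))
        = (∑ q : Fin 4, cc G S Γ t q q) * (2 * G t p i ib) := by
      rw [Finset.sum_mul]
    rw [e3, htr]
    ring
  -- T3 evaluation
  have key' : ∀ q : Fin 4, ∑ m : Fin 4, cc G S Γ t q m * ((g t m p : ℝ) : ℂ)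
      = -K * ((g t q p : ℝ) : ℂ) - ∑ m : Fin 4, cc G S Γ t p m * ((g t q m : ℝ) : ℂ) := by
    intro q
    have h0 := hstar q p
    simp only [Fin.sum_univ_four] at h0 ⊢
    linear_combination h0 - cc G S Γ t p 0 * hgsC 0 q - cc G S Γ t p 1 * hgsC 1 q
      - cc G S Γ t p 2 * hgsC 2 q - cc G S Γ t p 3 * hgsC 3 q
  have hT3 : (∑ q : Fin 4, ∑ a : Fin 4, ∑ m : Fin 4, ((h t a q : ℝ) : ℂ)
        * cc G S Γ t q m * (2 * ((g t m p : ℝ) : ℂ) * G t a i ib))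
      = -2 * K * G t p i ib - 2 * Dop G Γ t p i ib := by
    have e1 : (∑ q : Fin 4, ∑ a : Fin 4, ∑ m : Fin 4, ((h t a q : ℝ) : ℂ)
          * cc G S Γ t q m * (2 * ((g t m p : ℝ) : ℂ) * G t a i ib))
        = ∑ q : Fin 4, ∑ a : Fin 4, ((h t a q : ℝ) : ℂ)
            * ((∑ m : Fin 4, cc G S Γ t q m * ((g t m p : ℝ) : ℂ)) * (2 * G t a i ib)) := by
      simp only [Fin.sum_univ_four]
      ring
    rw [e1]
    simp only [key']
    have e2 : (∑ q : Fin 4, ∑ a : Fin 4, ((h t a q : ℝ) : ℂ)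
          * ((-K * ((g t q p : ℝ) : ℂ)
              - ∑ m : Fin 4, cc G S Γ t p m * ((g t q m : ℝ) : ℂ)) * (2 * G t a i ib)))
        = (-K) * (2 * (∑ a : Fin 4, (∑ q : Fin 4, ((h t a q : ℝ) : ℂ) * ((g t q p : ℝ) : ℂ))
              * G t a i ib))
          - 2 * (∑ m : Fin 4, cc G S Γ t p m
              * (∑ a : Fin 4, (∑ q : Fin 4, ((h t a q : ℝ) : ℂ) * ((g t q m : ℝ) : ℂ))
                  * G t a i ib)) := by
      simp only [Fin.sum_univ_four]
      ring
    rw [e2]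
    simp only [hHG, ite_mul, one_mul, zero_mul]
    simp only [Finset.sum_ite_eq', Finset.mem_univ, if_true]
    rw [← hDexp]
    ring
  -- assemble
  have hsplit : (∑ q : Fin 4, ∑ a : Fin 4, ∑ m : Fin 4, ((h t a q : ℝ) : ℂ)
        * cc G S Γ t q m
        * (2 * ((g t p a : ℝ) : ℂ) * G t m i ib + 2 * ((g t m a : ℝ) : ℂ) * G t p i ib
          - 2 * ((g t m p : ℝ) : ℂ) * G t a i ib))
      = (∑ q : Fin 4, ∑ a : Fin 4, ∑ m : Fin 4, ((h t a q : ℝ) : ℂ)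
          * cc G S Γ t q m * (2 * ((g t p a : ℝ) : ℂ) * G t m i ib))
        + (∑ q : Fin 4, ∑ a : Fin 4, ∑ m : Fin 4, ((h t a q : ℝ) : ℂ)
          * cc G S Γ t q m * (2 * ((g t m a : ℝ) : ℂ) * G t p i ib))
        + (∑ q : Fin 4, ∑ a : Fin 4, ∑ m : Fin 4, -(((h t a q : ℝ) : ℂ)
          * cc G S Γ t q m * (2 * ((g t m p : ℝ) : ℂ) * G t a i ib))) := by
    simp only [Fin.sum_univ_four]
    ring
  calc (∑ q : Fin 4, ((∑ k : Fin 2, ∑ sb : Fin 2, Dop G Γ t q i sb * S t q k sb * G t p k ib)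
      + (∑ s : Fin 2, ∑ kb : Fin 2, Dop G Γ t q s ib * S t q s kb * G t p i kb)))
      = ∑ q : Fin 4, ∑ a : Fin 4, ∑ m : Fin 4, ((h t a q : ℝ) : ℂ) * cc G S Γ t q m
          * (2 * ((g t p a : ℝ) : ℂ) * G t m i ib + 2 * ((g t m a : ℝ) : ℂ) * G t p i ib
            - 2 * ((g t m p : ℝ) : ℂ) * G t a i ib) := by
        refine Finset.sum_congr rfl fun q _ => ?_
        rw [stageA q, stageB q]
    _ = 4 * Dop G Γ t p i ib - 2 * K * G t p i ib := by
        rw [hsplit]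
        have hneg : (∑ q : Fin 4, ∑ a : Fin 4, ∑ m : Fin 4, -(((h t a q : ℝ) : ℂ)
            * cc G S Γ t q m * (2 * ((g t m p : ℝ) : ℂ) * G t a i ib)))
            = -(∑ q : Fin 4, ∑ a : Fin 4, ∑ m : Fin 4, ((h t a q : ℝ) : ℂ)
            * cc G S Γ t q m * (2 * ((g t m p : ℝ) : ℂ) * G t a i ib)) := by
          simp only [Fin.sum_univ_four]
          ring
        rw [hneg, hT1, hT2, hT3]
        ring

end derivkey

end IvdWAux


/-- The spinor connection coefficients `A^i_j` and the conjugate coefficients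
`B^ī_{k̄}` given by the explicit formulas satisfy the Infeld–van der Waerden
concordance condition `∇G = 0` along the given frame direction:
`((G_p)_{i,ī})' + Σ_k A^i_k (G_p)_{k,ī} + Σ_{k̄} B^ī_{k̄} (G_p)_{i,k̄}
  - Σ_k Γ^k_p (G_k)_{i,ī} = 0`. -/
theorem spinor_connection_IvdW_concordance
    (g h : ℝ → Fin 4 → Fin 4 → ℝ)
    (hg_symm : ∀ t i j, g t i j = g t j i)
    (hg_diff : ∀ i j, Differentiable ℝ (fun t => g t i j))
    (hgh : ∀ t p q, ∑ r : Fin 4, g t p r * h t r q = if p = q then (1 : ℝ) else 0)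
    (d e : ℝ → Fin 2 → Fin 2 → ℂ)
    (hd_diff : ∀ i j, Differentiable ℝ (fun t => d t i j))
    (hd_skew : ∀ t i j, d t i j = - d t j i)
    (hde : ∀ t j i, ∑ r : Fin 2, d t j r * e t r i = if j = i then (1 : ℂ) else 0)
    (G : ℝ → Fin 4 → Fin 2 → Fin 2 → ℂ)
    (hG_diff : ∀ p i j, Differentiable ℝ (fun t => G t p i j))
    (S : ℝ → Fin 4 → Fin 2 → Fin 2 → ℂ)
    (hS : ∀ t q s sb, S t q s sb
      = ∑ r : Fin 2, ∑ rb : Fin 2, ∑ p : Fin 4,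
          G t p r rb * (h t p q : ℂ) * d t r s * star (d t rb sb))
    (hquad1 : ∀ t p q, ∑ r : Fin 2, ∑ rb : Fin 2, G t p r rb * S t q r rb
      = 2 * (if p = q then (1 : ℂ) else 0))
    (hquad2 : ∀ t (r rb s sb : Fin 2), ∑ q : Fin 4, G t q r rb * S t q s sb
      = 2 * (if r = s then (1 : ℂ) else 0) * (if rb = sb then (1 : ℂ) else 0))
    (Γ : ℝ → Fin 4 → Fin 4 → ℝ)
    (hΓ_compat : ∀ t p q,
      (∑ a : Fin 4, g t p a * Γ t a q) + (∑ a : Fin 4, g t q a * Γ t a p)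
        = deriv (fun x => g x p q) t)
    (A : ℝ → Fin 2 → Fin 2 → ℂ)
    (hA : ∀ t i j, A t i j
      = (1 / 4) * (∑ sb : Fin 2, ∑ p : Fin 4, ∑ q : Fin 4,
            G t p i sb * (Γ t p q : ℂ) * S t q j sb)
        - (1 / 4) * (∑ sb : Fin 2, ∑ q : Fin 4,
            deriv (fun x => G x q i sb) t * S t q j sb)
        - (1 / 4) * (∑ ib : Fin 2, ∑ jb : Fin 2,
            deriv (fun x => star (d x jb ib)) t * star (e t ib jb))
          * (if i = j then (1 : ℂ) else 0))
    (hG_herm : ∀ t p i j, G t p i j = star (G t p j i))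
    (hsym_quad : ∀ t (p q : Fin 4) (r u rb ub : Fin 2),
      G t p r ub * G t q u rb + G t q r ub * G t p u rb
        = G t p r rb * G t q u ub + G t q r rb * G t p u ub
          - 2 * e t r u * star (e t rb ub) * (g t p q : ℂ))
    (B : ℝ → Fin 2 → Fin 2 → ℂ)
    (hB : ∀ t ib kb, B t ib kb
      = (1 / 4) * (∑ s : Fin 2, ∑ q : Fin 4, ∑ m : Fin 4,
            G t q s ib * (Γ t q m : ℂ) * S t m s kb)
        - (1 / 4) * (∑ s : Fin 2, ∑ m : Fin 4,
            deriv (fun x => G x m s ib) t * S t m s kb)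
        - (1 / 4) * (∑ s : Fin 2, ∑ u : Fin 2,
            deriv (fun x => d x s u) t * e t u s)
          * (if ib = kb then (1 : ℂ) else 0))
    : ∀ (t : ℝ) (p : Fin 4) (i ib : Fin 2),
      deriv (fun x => G x p i ib) t
        + (∑ k : Fin 2, A t i k * G t p k ib)
        + (∑ kb : Fin 2, B t ib kb * G t p i kb)
        - (∑ k : Fin 4, (Γ t k p : ℂ) * G t k i ib) = 0 := by
  intro t p i ib
  have hτB := IvdWAux.tau_eq d e hd_skew hde t
  have hstarder := IvdWAux.deriv_star_d d hd_diff t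
  have hτA : (∑ ib' : Fin 2, ∑ jb' : Fin 2,
      deriv (fun x => star (d x jb' ib')) t * star (e t ib' jb'))
      = 2 * star (deriv (fun x => d x 0 1) t * e t 1 0) := by
    have h1 : (∑ ib' : Fin 2, ∑ jb' : Fin 2,
        deriv (fun x => star (d x jb' ib')) t * star (e t ib' jb'))
        = star (∑ s : Fin 2, ∑ u : Fin 2, deriv (fun x => d x s u) t * e t u s) := by
      simp only [hstarder, Fin.sum_univ_two, star_add, star_mul']
      ring
    rw [h1, hτB]
    simp [star_mul']
  have hAk : ∀ k, A t i k
      = -(1/4) * (∑ sb : Fin 2, ∑ q : Fin 4, IvdWAux.Dop G Γ t q i sb * S t q k sb)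
        - (1/4) * (2 * star (deriv (fun x => d x 0 1) t * e t 1 0))
          * (if i = k then (1:ℂ) else 0) := by
    intro k
    rw [hA t i k, hτA]
    simp only [IvdWAux.Dop, Fin.sum_univ_two, Fin.sum_univ_four]
    ring
  have hBk : ∀ kb, B t ib kb
      = -(1/4) * (∑ s : Fin 2, ∑ q : Fin 4, IvdWAux.Dop G Γ t q s ib * S t q s kb)
        - (1/4) * (2 * (deriv (fun x => d x 0 1) t * e t 1 0))
          * (if ib = kb then (1:ℂ) else 0) := by
    intro kb
    rw [hB t ib kb, hτB]
    simp only [IvdWAux.Dop, Fin.sum_univ_two, Fin.sum_univ_four]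
    ring
  have hAG : (∑ k : Fin 2, A t i k * G t p k ib)
      = -(1/4) * (∑ k : Fin 2, (∑ sb : Fin 2, ∑ q : Fin 4,
            IvdWAux.Dop G Γ t q i sb * S t q k sb) * G t p k ib)
        - (1/4) * (2 * star (deriv (fun x => d x 0 1) t * e t 1 0)) * G t p i ib := by
    simp only [hAk]
    fin_cases i <;> simp [Fin.sum_univ_two] <;> try ring
  have hBG : (∑ kb : Fin 2, B t ib kb * G t p i kb)
      = -(1/4) * (∑ kb : Fin 2, (∑ s : Fin 2, ∑ q : Fin 4,
            IvdWAux.Dop G Γ t q s ib * S t q s kb) * G t p i kb)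
        - (1/4) * (2 * (deriv (fun x => d x 0 1) t * e t 1 0)) * G t p i ib := by
    simp only [hBk]
    fin_cases ib <;> simp [Fin.sum_univ_two] <;> try ring
  have hKey := IvdWAux.goalKey g h hg_symm hg_diff hgh d e hd_diff hd_skew hde G hG_diff
    S hS hquad1 hquad2 Γ hΓ_compat hsym_quad t p i ib
  have hre : (∑ k : Fin 2, (∑ sb : Fin 2, ∑ q : Fin 4,
        IvdWAux.Dop G Γ t q i sb * S t q k sb) * G t p k ib)
      + (∑ kb : Fin 2, (∑ s : Fin 2, ∑ q : Fin 4,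
        IvdWAux.Dop G Γ t q s ib * S t q s kb) * G t p i kb)
      = (∑ q : Fin 4, ((∑ k : Fin 2, ∑ sb : Fin 2,
          IvdWAux.Dop G Γ t q i sb * S t q k sb * G t p k ib)
        + (∑ s : Fin 2, ∑ kb : Fin 2,
          IvdWAux.Dop G Γ t q s ib * S t q s kb * G t p i kb))) := by
    simp only [Fin.sum_univ_two, Fin.sum_univ_four]
    ring
  have hDrw : deriv (fun x => G x p i ib) t - (∑ k : Fin 4, (Γ t k p : ℂ) * G t k i ib)
      = IvdWAux.Dop G Γ t p i ib := rfl
  rw [hAG, hBG]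
  rw [← hre] at hKey
  linear_combination hDrw - (1/4 : ℂ) * hKey
end
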